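/- arXiv:2206.07995 — 4 statements merged into one kernel-verified Lean document; each statement's English description precedes it below -/
import Mathlib

section
/- There exist constants C > 0 and N such that for all integers n ≥ N, | max_{x ∈ Z_2^n} |L_1(x)| − (n² − √2 · n^{3/2}) | ≤ C·n; that is, the maximum size of a binary FLL 1-ball is n² − √2·n^{3/2} + O(n). -/
open scoped Classical

/-- Length of a longest common subsequence of two lists. -/
noncomputable def lcsLen {α : Type*} (x y : List α) : ℕ :=
  sSup {k | ∃ z : List α, z.Sublist x ∧ z.Sublist y ∧ z.length = k}

/-- The fixed-length Levenshtein (FLL) distance on `Fin n → Fin q`: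
`d_ℓ(x,y) = n - LCS(x,y)`. -/
noncomputable def fllDist {q n : ℕ} (x y : Fin n → Fin q) : ℕ :=
  n - lcsLen (List.ofFn x) (List.ofFn y)

/-- The FLL `t`-ball centered at `x`. -/
noncomputable def fllBall (q n t : ℕ) (x : Fin n → Fin q) : Finset (Fin n → Fin q) :=
  Finset.univ.filter fun y => fllDist x y ≤ t

/-- The Hamming `t`-ball centered at `x`. -/
noncomputable def hammingBall (q n t : ℕ) (x : Fin n → Fin q) : Finset (Fin n → Fin q) :=
  Finset.univ.filter fun y => hammingDist x y ≤ t

/-- The number of runs (maximal blocks of consecutive equal symbols) of a list. -/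
def numRuns {α : Type*} [DecidableEq α] : List α → ℕ
  | [] => 0
  | [_] => 1
  | a :: b :: l => (if a = b then 0 else 1) + numRuns (b :: l)

/-- A list is alternating (of shape `σ σ' σ σ' ⋯` with `σ ≠ σ'`): adjacent entries
differ and entries two apart agree. -/
def IsAltList {α : Type*} (l : List α) : Prop :=
  (∀ i, ∀ h : i + 1 < l.length, l.get ⟨i, by omega⟩ ≠ l.get ⟨i + 1, h⟩) ∧
  (∀ i, ∀ h : i + 2 < l.length, l.get ⟨i, by omega⟩ = l.get ⟨i + 2, h⟩)

/-- The contiguous block `l_i ⋯ l_j` of a list (0-indexed, inclusive). -/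
def blockSeg {α : Type*} (l : List α) (i j : ℕ) : List α := (l.drop i).take (j + 1 - i)

/-- `(i, j)` indexes a maximal alternating segment of `l`. -/
def IsMaxAltSeg {α : Type*} (l : List α) (i j : ℕ) : Prop :=
  i ≤ j ∧ j < l.length ∧ IsAltList (blockSeg l i j) ∧
    (i = 0 ∨ ¬ IsAltList (blockSeg l (i - 1) j)) ∧
    (j = l.length - 1 ∨ ¬ IsAltList (blockSeg l i (j + 1)))

/-- The index pairs of the maximal alternating segments of `l`. -/
noncomputable def maxAltSegs {α : Type*} (l : List α) : Finset (ℕ × ℕ) :=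
  (Finset.range l.length ×ˢ Finset.range l.length).filter fun p => IsMaxAltSeg l p.1 p.2

/-- `A(x)`: the number of maximal alternating segments. -/
noncomputable def numAltSegs {α : Type*} (l : List α) : ℕ := (maxAltSegs l).card

/-- The sum `Σ s_i` of the lengths of the maximal alternating segments. -/
noncomputable def segLenSum {α : Type*} (l : List α) : ℕ :=
  ∑ p ∈ maxAltSegs l, (p.2 + 1 - p.1)

/-- The sum `Σ s_i²` of the squared lengths of the maximal alternating segments. -/
noncomputable def segLenSqSum {α : Type*} (l : List α) : ℕ :=
  ∑ p ∈ maxAltSegs l, (p.2 + 1 - p.1) ^ 2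

/-- `x ∈ Z_2^n` is `a`-balanced: it has `a` maximal alternating segments, each of
length `⌈n/a⌉` or `⌈n/a⌉ - 1`. -/
def IsBalanced (n a : ℕ) (x : Fin n → Fin 2) : Prop :=
  numAltSegs (List.ofFn x) = a ∧
    ∀ p ∈ maxAltSegs (List.ofFn x),
      p.2 + 1 - p.1 = (n + a - 1) / a ∨ p.2 + 1 - p.1 = (n + a - 1) / a - 1

/-- The number of zero entries of the difference vector
`x' = (x₂ - x₁, …, x_n - x_{n-1})` (differences mod `q`). -/
def zerosDiff {q n : ℕ} (x : Fin n → Fin q) : ℕ :=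
  (List.zipWith (fun a b => a - b) (List.ofFn x).tail (List.ofFn x)).countP fun v => v.val == 0

/-- Hamming weight of a binary word. -/
def wt {n : ℕ} (a : Fin n → Fin 2) : ℕ := (Finset.univ.filter fun i => a i ≠ 0).card

/-- An anticode of diameter one in `Z_2^n` under the FLL metric. -/
def IsAnticode1 (n : ℕ) (A : Finset (Fin n → Fin 2)) : Prop :=
  ∀ a ∈ A, ∀ b ∈ A, fllDist a b ≤ 1

/-- A maximal anticode of diameter one. -/
def IsMaximalAnticode1 (n : ℕ) (A : Finset (Fin n → Fin 2)) : Prop :=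
  IsAnticode1 n A ∧ ∀ B : Finset (Fin n → Fin 2), IsAnticode1 n B → A ⊆ B → A = B

/-- `χ(s)`: the total number, over all `x ∈ Z_q^n`, of maximal alternating
segments of `x` of length `s`. -/
noncomputable def chi (q n s : ℕ) : ℕ :=
  ∑ x : Fin n → Fin q, ((maxAltSegs (List.ofFn x)).filter fun p => p.2 + 1 - p.1 = s).card

namespace FLL1
open Finset

def flipF : Fin 2 → Fin 2 := fun a => if a = 0 then 1 else 0

lemma flipF_ne : ∀ a : Fin 2, flipF a ≠ a := by decide

lemma eq_flipF_of_ne : ∀ {a b : Fin 2}, b ≠ a → b = flipF a := by decide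

lemma eq_of_ne_ne : ∀ {a b c : Fin 2}, a ≠ c → b ≠ c → a = b := by decide

variable {n : ℕ}

def X (x : Fin n → Fin 2) (i : ℕ) : Fin 2 := if h : i < n then x ⟨i, h⟩ else 0

lemma X_lt (x : Fin n → Fin 2) {i : ℕ} (h : i < n) : X x i = x ⟨i, h⟩ := by simp [X, h]

lemma X_coe (x : Fin n → Fin 2) (k : Fin n) : X x (k : ℕ) = x k := by
  rw [X_lt x k.isLt]

lemma getElem_ofFn_X (x : Fin n → Fin 2) (k : ℕ) (h : k < (List.ofFn x).length) :
    (List.ofFn x)[k] = X x k := by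
  rw [List.getElem_ofFn, X_lt x (by simpa using h)]

-- lcs lemmas
lemma lcs_nonempty {α : Type*} (x y : List α) :
    {k | ∃ z : List α, z.Sublist x ∧ z.Sublist y ∧ z.length = k}.Nonempty :=
  ⟨0, [], List.nil_sublist _, List.nil_sublist _, rfl⟩

lemma lcs_bdd {α : Type*} (x y : List α) :
    BddAbove {k | ∃ z : List α, z.Sublist x ∧ z.Sublist y ∧ z.length = k} := by
  refine ⟨x.length, fun k hk => ?_⟩
  obtain ⟨z, h1, _, h3⟩ := hk
  exact h3 ▸ h1.length_le

lemma le_lcsLen {α : Type*} {x y z : List α} (h1 : z.Sublist x) (h2 : z.Sublist y) :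
    z.length ≤ lcsLen x y :=
  le_csSup (lcs_bdd x y) ⟨z, h1, h2, rfl⟩

lemma lcsLen_le {α : Type*} (x y : List α) : lcsLen x y ≤ x.length := by
  refine csSup_le (lcs_nonempty x y) (fun k hk => ?_)
  obtain ⟨z, h1, _, h3⟩ := hk
  exact h3 ▸ h1.length_le

lemma exists_lcs {α : Type*} (x y : List α) :
    ∃ z : List α, z.Sublist x ∧ z.Sublist y ∧ z.length = lcsLen x y :=
  Nat.sSup_mem (lcs_nonempty x y) (lcs_bdd x y)

lemma mem_fllBall_iff (x y : Fin n → Fin 2) :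
    y ∈ fllBall 2 n 1 x ↔ n ≤ lcsLen (List.ofFn x) (List.ofFn y) + 1 := by
  simp only [fllBall, fllDist, Finset.mem_filter, Finset.mem_univ, true_and]
  simp
  omega

lemma mem_of_eraseIdx_eq {x y : Fin n → Fin 2} {p q : ℕ} (hp : p < n)
    (h : (List.ofFn x).eraseIdx p = (List.ofFn y).eraseIdx q) :
    y ∈ fllBall 2 n 1 x := by
  rw [mem_fllBall_iff]
  have h1 : ((List.ofFn x).eraseIdx p).Sublist (List.ofFn x) := List.eraseIdx_sublist _ _
  have h2 : ((List.ofFn x).eraseIdx p).Sublist (List.ofFn y) := h ▸ List.eraseIdx_sublist _ _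
  have hlen : ((List.ofFn x).eraseIdx p).length = n - 1 := by
    rw [List.length_eraseIdx]; simp [hp]
  have := le_lcsLen h1 h2
  omega

lemma sublist_eraseIdx {α : Type*} : ∀ {z l : List α}, z.Sublist l → z.length + 1 = l.length →
    ∃ i, i < l.length ∧ z = l.eraseIdx i := by
  intro z l h
  induction h with
  | slnil => intro h; simp at h
  | @cons l₁ l₂ a h ih =>
    intro hl
    have hlen : l₁.length = l₂.length := by simpa using hl
    have := h.eq_of_length hlen
    exact ⟨0, by simp, by simp [this]⟩
  | @cons_cons l₁ l₂ a h ih =>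
    intro hl
    obtain ⟨i, hi, hz⟩ := ih (by simpa using hl)
    exact ⟨i + 1, by simpa using hi, by simp [hz, List.eraseIdx]⟩

-- the words
def leftW (x : Fin n → Fin 2) (p q : ℕ) : Fin n → Fin 2 := fun k =>
  if (k : ℕ) = q then flipF (X x q)
  else if p ≤ (k : ℕ) ∧ (k : ℕ) < q then X x ((k : ℕ) + 1)
  else x k

def rightW (x : Fin n → Fin 2) (p q : ℕ) : Fin n → Fin 2 := fun k =>
  if (k : ℕ) = p then flipF (X x p)
  else if p < (k : ℕ) ∧ (k : ℕ) ≤ q then X x ((k : ℕ) - 1)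
  else x k

lemma X_leftW (x : Fin n → Fin 2) (p q k : ℕ) (hk : k < n) :
    X (leftW x p q) k =
      if k = q then flipF (X x q) else if p ≤ k ∧ k < q then X x (k + 1) else X x k := by
  rw [X_lt _ hk]
  show (if ((⟨k, hk⟩ : Fin n) : ℕ) = q then flipF (X x q)
    else if p ≤ ((⟨k, hk⟩ : Fin n) : ℕ) ∧ ((⟨k, hk⟩ : Fin n) : ℕ) < q then X x (((⟨k, hk⟩ : Fin n) : ℕ) + 1)
    else x ⟨k, hk⟩) = _
  rw [X_lt x hk]

lemma X_rightW (x : Fin n → Fin 2) (p q k : ℕ) (hk : k < n) :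
    X (rightW x p q) k =
      if k = p then flipF (X x p) else if p < k ∧ k ≤ q then X x (k - 1) else X x k := by
  rw [X_lt _ hk]
  show (if ((⟨k, hk⟩ : Fin n) : ℕ) = p then flipF (X x p)
    else if p < ((⟨k, hk⟩ : Fin n) : ℕ) ∧ ((⟨k, hk⟩ : Fin n) : ℕ) ≤ q then X x (((⟨k, hk⟩ : Fin n) : ℕ) - 1)
    else x ⟨k, hk⟩) = _
  rw [X_lt x hk]

lemma left_erase (x : Fin n → Fin 2) {p q : ℕ} (hpq : p ≤ q) (hq : q < n) :
    (List.ofFn x).eraseIdx p = (List.ofFn (leftW x p q)).eraseIdx q := by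
  have hp : p < n := Nat.lt_of_le_of_lt hpq hq
  apply List.ext_getElem
  · rw [List.length_eraseIdx, List.length_eraseIdx]
    simp [hp, hq]
  · intro k h1 h2
    have hk : k < n - 1 := by
      rw [List.length_eraseIdx] at h1; simp [hp] at h1; omega
    rw [List.getElem_eraseIdx, List.getElem_eraseIdx]
    by_cases hkp : k < p
    · rw [dif_pos hkp, dif_pos (by omega : k < q), getElem_ofFn_X, getElem_ofFn_X,
        X_leftW x p q k (by omega), if_neg (by omega), if_neg (by omega)]
    · by_cases hkq : k < q
      · rw [dif_neg hkp, dif_pos hkq, getElem_ofFn_X, getElem_ofFn_X,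
          X_leftW x p q k (by omega), if_neg (by omega), if_pos (by omega)]
      · rw [dif_neg hkp, dif_neg hkq, getElem_ofFn_X, getElem_ofFn_X,
          X_leftW x p q (k + 1) (by omega), if_neg (by omega), if_neg (by omega)]

lemma right_erase (x : Fin n → Fin 2) {p q : ℕ} (hpq : p ≤ q) (hq : q < n) :
    (List.ofFn x).eraseIdx q = (List.ofFn (rightW x p q)).eraseIdx p := by
  have hp : p < n := Nat.lt_of_le_of_lt hpq hq
  apply List.ext_getElem
  · rw [List.length_eraseIdx, List.length_eraseIdx]
    simp [hp, hq]
  · intro k h1 h2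
    have hk : k < n - 1 := by
      rw [List.length_eraseIdx] at h1; simp [hq] at h1; omega
    rw [List.getElem_eraseIdx, List.getElem_eraseIdx]
    by_cases hkp : k < p
    · rw [dif_pos (by omega : k < q), dif_pos hkp, getElem_ofFn_X, getElem_ofFn_X,
        X_rightW x p q k (by omega), if_neg (by omega), if_neg (by omega)]
    · by_cases hkq : k < q
      · rw [dif_pos hkq, dif_neg hkp, getElem_ofFn_X, getElem_ofFn_X,
          X_rightW x p q (k + 1) (by omega), if_neg (by omega), if_pos (by omega)]
        congr 1
      · rw [dif_neg hkq, dif_neg hkp, getElem_ofFn_X, getElem_ofFn_X,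
          X_rightW x p q (k + 1) (by omega), if_neg (by omega), if_neg (by omega)]

lemma leftW_mem_ball (x : Fin n → Fin 2) {p q : ℕ} (hpq : p ≤ q) (hq : q < n) :
    leftW x p q ∈ fllBall 2 n 1 x :=
  mem_of_eraseIdx_eq (Nat.lt_of_le_of_lt hpq hq) (left_erase x hpq hq)

lemma rightW_mem_ball (x : Fin n → Fin 2) {p q : ℕ} (hpq : p ≤ q) (hq : q < n) :
    rightW x p q ∈ fllBall 2 n 1 x :=
  mem_of_eraseIdx_eq hq (right_erase x hpq hq)


lemma X_ge (x : Fin n → Fin 2) {i : ℕ} (h : n ≤ i) : X x i = 0 := by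
  rw [X, dif_neg (by omega)]

lemma eq_of_X {y w : Fin n → Fin 2} (h : ∀ k, k < n → X y k = X w k) : y = w :=
  funext fun k => by rw [← X_coe y k, ← X_coe w k]; exact h _ k.isLt

def Prof (x y : Fin n → Fin 2) (p q : ℕ) : Prop :=
  (∀ k, k < n → (k < p ∨ q < k) → X y k = X x k) ∧ X y p ≠ X x p ∧ X y q ≠ X x q

lemma prof_leftW (x : Fin n → Fin 2) {p q : ℕ} (hpq : p ≤ q) (hq : q < n)
    (hcond : p < q → X x p ≠ X x (p + 1)) : Prof x (leftW x p q) p q := by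
  have hp : p < n := Nat.lt_of_le_of_lt hpq hq
  refine ⟨fun k hk hor => ?_, ?_, ?_⟩
  · rw [X_leftW _ _ _ _ hk, if_neg (by omega), if_neg (by omega)]
  · rw [X_leftW _ _ _ _ hp]
    by_cases h : p = q
    · rw [if_pos h, h]; exact flipF_ne _
    · rw [if_neg h, if_pos ⟨le_rfl, by omega⟩]
      exact fun hh => hcond (by omega) hh.symm
  · rw [X_leftW _ _ _ _ hq, if_pos rfl]; exact flipF_ne _

lemma prof_rightW (x : Fin n → Fin 2) {p q : ℕ} (hpq : p ≤ q) (hq : q < n)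
    (hcond : p < q → X x (q - 1) ≠ X x q) : Prof x (rightW x p q) p q := by
  have hp : p < n := Nat.lt_of_le_of_lt hpq hq
  refine ⟨fun k hk hor => ?_, ?_, ?_⟩
  · rw [X_rightW _ _ _ _ hk, if_neg (by omega), if_neg (by omega)]
  · rw [X_rightW _ _ _ _ hp, if_pos rfl]; exact flipF_ne _
  · rw [X_rightW _ _ _ _ hq]
    by_cases h : q = p
    · rw [if_pos h, h]; exact flipF_ne _
    · rw [if_neg h, if_pos ⟨by omega, le_rfl⟩]
      exact fun hh => hcond (by omega) hh

lemma prof_unique {x y : Fin n → Fin 2} {p1 q1 p2 q2 : ℕ}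
    (h1 : Prof x y p1 q1) (h2 : Prof x y p2 q2)
    (hp1 : p1 < n) (hq1 : q1 < n) (hp2 : p2 < n) (hq2 : q2 < n) :
    p1 = p2 ∧ q1 = q2 := by
  obtain ⟨O1, D1p, D1q⟩ := h1
  obtain ⟨O2, D2p, D2q⟩ := h2
  constructor
  · rcases Nat.lt_trichotomy p1 p2 with h | h | h
    · exact absurd (O2 p1 hp1 (Or.inl h)) D1p
    · exact h
    · exact absurd (O1 p2 hp2 (Or.inl h)) D2p
  · rcases Nat.lt_trichotomy q1 q2 with h | h | h
    · exact absurd (O1 q2 hq2 (Or.inr h)) D2q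
    · exact h
    · exact absurd (O2 q1 hq1 (Or.inr h)) D1q

lemma left_eq_right_alt {x : Fin n → Fin 2} {p q : ℕ} (hpq : p < q) (hq : q < n)
    (h : leftW x p q = rightW x p q) :
    ∀ k, p ≤ k → k < q → X x k ≠ X x (k + 1) := by
  have hp : p < n := by omega
  have base : X x p ≠ X x (p + 1) := by
    have e1 : X (leftW x p q) p = X x (p + 1) := by
      rw [X_leftW _ _ _ _ hp, if_neg (by omega), if_pos ⟨le_rfl, hpq⟩]
    have e2 : X (rightW x p q) p = flipF (X x p) := by
      rw [X_rightW _ _ _ _ hp, if_pos rfl]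
    have e3 : X x (p + 1) = flipF (X x p) := by rw [← e1, ← e2, h]
    rw [e3]; exact fun hh => flipF_ne _ hh.symm
  intro k hk
  induction k, hk using Nat.le_induction with
  | base => exact fun _ => base
  | succ k hk ih =>
    intro hkq
    have hk1n : k + 1 < n := by omega
    have e1 : X (leftW x p q) (k + 1) = X x (k + 2) := by
      rw [X_leftW _ _ _ _ hk1n, if_neg (by omega), if_pos ⟨by omega, hkq⟩]
    have e2 : X (rightW x p q) (k + 1) = X x k := by
      rw [X_rightW _ _ _ _ hk1n, if_neg (by omega), if_pos ⟨by omega, by omega⟩]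
      norm_num
    have e3 : X x (k + 2) = X x k := by rw [← e1, ← e2, h]
    rw [e3]
    exact fun hh => ih (by omega) hh.symm

lemma alt_left_eq_right {x : Fin n → Fin 2} {p q : ℕ} (hpq : p < q) (hq : q < n)
    (halt : ∀ k, p ≤ k → k < q → X x k ≠ X x (k + 1)) :
    leftW x p q = rightW x p q := by
  apply eq_of_X
  intro k hkn
  rw [X_leftW _ _ _ _ hkn, X_rightW _ _ _ _ hkn]
  by_cases h1 : k = q
  · rw [if_pos h1, if_neg (by omega), if_pos (by omega), h1]
    have h2 := halt (q - 1) (by omega) (by omega)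
    rw [show q - 1 + 1 = q by omega] at h2
    exact (eq_flipF_of_ne h2).symm
  · by_cases h2 : k = p
    · rw [if_neg h1, if_pos ⟨by omega, by omega⟩, if_pos h2, h2]
      exact eq_flipF_of_ne (fun hh => halt p le_rfl hpq hh.symm)
    · by_cases h3 : p < k ∧ k < q
      · rw [if_neg h1, if_pos ⟨by omega, by omega⟩, if_neg h2, if_pos ⟨h3.1, by omega⟩]
        have ha := halt (k - 1) (by omega) (by omega)
        rw [show k - 1 + 1 = k by omega] at ha
        exact eq_of_ne_ne (fun hh => halt k (by omega) h3.2 hh.symm) ha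
      · rw [if_neg h1, if_neg (by omega), if_neg h2, if_neg (by omega)]

lemma cover {x y : Fin n → Fin 2} (hy : y ∈ fllBall 2 n 1 x) (hxy : y ≠ x) :
    ∃ p q : ℕ, p ≤ q ∧ q < n ∧
      ((p = q ∧ y = leftW x p q) ∨
       (p < q ∧ X x p ≠ X x (p + 1) ∧ y = leftW x p q) ∨
       (p < q ∧ X x (q - 1) ≠ X x q ∧ y = rightW x p q)) := by
  rw [mem_fllBall_iff] at hy
  have hn : 1 ≤ n := by
    by_contra h
    exact hxy (funext fun k => absurd k.isLt (by omega))
  obtain ⟨z, hzx, hzy, hzl⟩ := exists_lcs (List.ofFn x) (List.ofFn y)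
  have hle : lcsLen (List.ofFn x) (List.ofFn y) ≤ n := by
    simpa using lcsLen_le (List.ofFn x) (List.ofFn y)
  rcases (by omega : z.length = n ∨ z.length = n - 1) with hlen | hlen
  · exfalso
    have e1 := hzx.eq_of_length (by simp [hlen])
    have e2 := hzy.eq_of_length (by simp [hlen])
    exact hxy (List.ofFn_inj.mp (e2.symm.trans e1))
  · obtain ⟨i, hi, hzi⟩ := sublist_eraseIdx hzx (by simp [hlen]; omega)
    obtain ⟨j, hj, hzj⟩ := sublist_eraseIdx hzy (by simp [hlen]; omega)
    have hi' : i < n := by simpa using hi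
    have hj' : j < n := by simpa using hj
    have heq : (List.ofFn x).eraseIdx i = (List.ofFn y).eraseIdx j := by
      rw [← hzi, ← hzj]
    have key : ∀ k, k < n - 1 →
        (if k < i then X x k else X x (k + 1)) = (if k < j then X y k else X y (k + 1)) := by
      intro k hk
      have hk1 : k < ((List.ofFn x).eraseIdx i).length := by
        rw [List.length_eraseIdx]; simp [hi']; omega
      have hthis := List.getElem_of_eq heq hk1
      rw [List.getElem_eraseIdx, List.getElem_eraseIdx] at hthis
      by_cases hki : k < i <;> by_cases hkj : k < j
      · rw [dif_pos hki, dif_pos hkj, getElem_ofFn_X, getElem_ofFn_X] at hthis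
        rw [if_pos hki, if_pos hkj]; exact hthis
      · rw [dif_pos hki, dif_neg hkj, getElem_ofFn_X, getElem_ofFn_X] at hthis
        rw [if_pos hki, if_neg hkj]; exact hthis
      · rw [dif_neg hki, dif_pos hkj, getElem_ofFn_X, getElem_ofFn_X] at hthis
        rw [if_neg hki, if_pos hkj]; exact hthis
      · rw [dif_neg hki, dif_neg hkj, getElem_ofFn_X, getElem_ofFn_X] at hthis
        rw [if_neg hki, if_neg hkj]; exact hthis
    have hΔne : ((Finset.range n).filter fun k => X y k ≠ X x k).Nonempty := by
      have h0 : ¬ ∀ k : Fin n, y k = x k := fun h => hxy (funext h)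
      push_neg at h0
      obtain ⟨k, hk⟩ := h0
      exact ⟨(k : ℕ), Finset.mem_filter.mpr ⟨Finset.mem_range.mpr k.isLt,
        by rw [X_coe, X_coe]; exact hk⟩⟩
    set Δ := (Finset.range n).filter fun k => X y k ≠ X x k with hΔ
    set p := Δ.min' hΔne with hpdef
    set q := Δ.max' hΔne with hqdef
    have hpΔ : p ∈ Δ := Finset.min'_mem _ _
    have hqΔ : q ∈ Δ := Finset.max'_mem _ _
    have hpq : p ≤ q := Finset.min'_le _ _ hqΔ
    have hqn : q < n := Finset.mem_range.mp (Finset.mem_filter.mp hqΔ).1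
    have hpn : p < n := by omega
    have hDp : X y p ≠ X x p := (Finset.mem_filter.mp hpΔ).2
    have hDq : X y q ≠ X x q := (Finset.mem_filter.mp hqΔ).2
    have hout : ∀ k, k < n → (k < p ∨ q < k) → X y k = X x k := by
      intro k hk hor
      by_contra hne
      have hkΔ : k ∈ Δ := Finset.mem_filter.mpr ⟨Finset.mem_range.mpr hk, hne⟩
      have l1 := Finset.min'_le Δ k hkΔ
      have l2 := Finset.le_max' Δ k hkΔ
      omega
    by_cases hpq2 : p = q
    · refine ⟨p, q, hpq, hqn, Or.inl ⟨hpq2, ?_⟩⟩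
      apply eq_of_X
      intro k hkn
      rw [X_leftW _ _ _ _ hkn]
      by_cases hk1 : k = q
      · rw [if_pos hk1, hk1]; exact eq_flipF_of_ne hDq
      · rw [if_neg hk1, if_neg (by omega)]
        exact hout k hkn (by omega)
    · have hplt : p < q := by omega
      rcases le_or_gt i j with hij | hij
      · have Hmid : ∀ k, i ≤ k → k < j → X y k = X x (k + 1) := by
          intro k hk1 hk2
          have hkey := key k (by omega)
          rw [if_neg (by omega), if_pos hk2] at hkey
          exact hkey.symm
        have Hlow : ∀ k, k < i → X x k = X y k := by
          intro k hk
          have hkey := key k (by omega)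
          rwa [if_pos hk, if_pos (by omega)] at hkey
        have Hhigh : ∀ k, j < k → k < n → X x k = X y k := by
          intro k hk1 hk2
          have hkey := key (k - 1) (by omega)
          rw [if_neg (by omega), if_neg (by omega), show k - 1 + 1 = k by omega] at hkey
          exact hkey
        have hip : i ≤ p := by
          by_contra h; push_neg at h
          exact hDp (Hlow p h).symm
        have hqj : q ≤ j := by
          by_contra h; push_neg at h
          exact hDq (Hhigh q h hqn).symm
        have hcond : X x p ≠ X x (p + 1) := by
          have h1 : X y p = X x (p + 1) := Hmid p hip (by omega)
          exact fun h => hDp (h1.trans h.symm)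
        refine ⟨p, q, hpq, hqn, Or.inr (Or.inl ⟨hplt, hcond, ?_⟩)⟩
        apply eq_of_X
        intro k hkn
        rw [X_leftW _ _ _ _ hkn]
        by_cases hk1 : k = q
        · rw [if_pos hk1, hk1]; exact eq_flipF_of_ne hDq
        · by_cases hk2 : p ≤ k ∧ k < q
          · rw [if_neg hk1, if_pos hk2]
            exact Hmid k (le_trans hip hk2.1) (by omega)
          · rw [if_neg hk1, if_neg hk2]
            exact hout k hkn (by omega)
      · have Hmid : ∀ k, j < k → k ≤ i → X y k = X x (k - 1) := by
          intro k hk1 hk2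
          have hkey := key (k - 1) (by omega)
          rw [if_pos (by omega), if_neg (by omega), show k - 1 + 1 = k by omega] at hkey
          exact hkey.symm
        have Hlow : ∀ k, k < j → X x k = X y k := by
          intro k hk
          have hkey := key k (by omega)
          rwa [if_pos (by omega), if_pos hk] at hkey
        have Hhigh : ∀ k, i < k → k < n → X x k = X y k := by
          intro k hk1 hk2
          have hkey := key (k - 1) (by omega)
          rw [if_neg (by omega), if_neg (by omega), show k - 1 + 1 = k by omega] at hkey
          exact hkey
        have hjp : j ≤ p := by
          by_contra h; push_neg at h
          exact hDp (Hlow p h).symm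
        have hqi : q ≤ i := by
          by_contra h; push_neg at h
          exact hDq (Hhigh q h hqn).symm
        have hcond : X x (q - 1) ≠ X x q := by
          have h1 : X y q = X x (q - 1) := Hmid q (by omega) hqi
          exact fun h => hDq (h1.trans h)
        refine ⟨p, q, hpq, hqn, Or.inr (Or.inr ⟨hplt, hcond, ?_⟩)⟩
        apply eq_of_X
        intro k hkn
        rw [X_rightW _ _ _ _ hkn]
        by_cases hk1 : k = p
        · rw [if_pos hk1, hk1]; exact eq_flipF_of_ne hDp
        · by_cases hk2 : p < k ∧ k ≤ q
          · rw [if_neg hk1, if_pos hk2]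
            exact Hmid k (by omega) (le_trans hk2.2 hqi)
          · rw [if_neg hk1, if_neg hk2]
            exact hout k hkn (by omega)

def Dset (x : Fin n → Fin 2) : Finset ℕ :=
  (Finset.range (n - 1)).filter fun t => ¬ (X x t = X x (t + 1))

def LPs (x : Fin n → Fin 2) : Finset (ℕ × ℕ) :=
  ((Finset.range n) ×ˢ (Finset.range n)).filter fun pq =>
    pq.1 < pq.2 ∧ ¬ (X x pq.1 = X x (pq.1 + 1))

def RPs (x : Fin n → Fin 2) : Finset (ℕ × ℕ) :=
  ((Finset.range n) ×ˢ (Finset.range n)).filter fun pq =>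
    pq.1 < pq.2 ∧ ¬ (X x (pq.2 - 1) = X x pq.2)

def APs (x : Fin n → Fin 2) : Finset (ℕ × ℕ) :=
  ((Finset.range n) ×ˢ (Finset.range n)).filter fun pq =>
    pq.1 < pq.2 ∧ ∀ k, pq.1 ≤ k → k < pq.2 → ¬ (X x k = X x (k + 1))

def LWs (x : Fin n → Fin 2) : Finset (Fin n → Fin 2) :=
  (LPs x).image fun pq => leftW x pq.1 pq.2

def RWs (x : Fin n → Fin 2) : Finset (Fin n → Fin 2) :=
  (RPs x).image fun pq => rightW x pq.1 pq.2

def Flips (x : Fin n → Fin 2) : Finset (Fin n → Fin 2) :=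
  (Finset.range n).image fun p => leftW x p p

lemma mem_LPs {x : Fin n → Fin 2} {pq : ℕ × ℕ} :
    pq ∈ LPs x ↔ pq.1 < pq.2 ∧ pq.2 < n ∧ X x pq.1 ≠ X x (pq.1 + 1) := by
  simp only [LPs, mem_filter, mem_product, mem_range, Ne]
  constructor
  · rintro ⟨⟨h1, h2⟩, h3, h4⟩; exact ⟨h3, h2, h4⟩
  · rintro ⟨h1, h2, h3⟩; exact ⟨⟨by omega, h2⟩, h1, h3⟩

lemma mem_RPs {x : Fin n → Fin 2} {pq : ℕ × ℕ} :
    pq ∈ RPs x ↔ pq.1 < pq.2 ∧ pq.2 < n ∧ X x (pq.2 - 1) ≠ X x pq.2 := by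
  simp only [RPs, mem_filter, mem_product, mem_range, Ne]
  constructor
  · rintro ⟨⟨h1, h2⟩, h3, h4⟩; exact ⟨h3, h2, h4⟩
  · rintro ⟨h1, h2, h3⟩; exact ⟨⟨by omega, h2⟩, h1, h3⟩

lemma mem_APs {x : Fin n → Fin 2} {pq : ℕ × ℕ} :
    pq ∈ APs x ↔ pq.1 < pq.2 ∧ pq.2 < n ∧
      ∀ k, pq.1 ≤ k → k < pq.2 → X x k ≠ X x (k + 1) := by
  simp only [APs, mem_filter, mem_product, mem_range, Ne]
  constructor
  · rintro ⟨⟨h1, h2⟩, h3, h4⟩; exact ⟨h3, h2, h4⟩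
  · rintro ⟨h1, h2, h3⟩; exact ⟨⟨by omega, h2⟩, h1, h3⟩

lemma APs_subset_LPs (x : Fin n → Fin 2) : APs x ⊆ LPs x := by
  intro pq h
  rw [mem_APs] at h
  exact mem_LPs.mpr ⟨h.1, h.2.1, h.2.2 pq.1 le_rfl h.1⟩

lemma APs_subset_RPs (x : Fin n → Fin 2) : APs x ⊆ RPs x := by
  intro pq h
  rw [mem_APs] at h
  refine mem_RPs.mpr ⟨h.1, h.2.1, ?_⟩
  have := h.2.2 (pq.2 - 1) (by omega) (by omega)
  rwa [show pq.2 - 1 + 1 = pq.2 by omega] at this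

lemma card_LWs (x : Fin n → Fin 2) : (LWs x).card = (LPs x).card := by
  apply Finset.card_image_of_injOn
  intro pq h pq' h' heq
  have heq' : leftW x pq.1 pq.2 = leftW x pq'.1 pq'.2 := heq
  rw [Finset.mem_coe, mem_LPs] at h h'
  have pr := prof_leftW x (le_of_lt h.1) h.2.1 (fun _ => h.2.2)
  have pr' := prof_leftW x (le_of_lt h'.1) h'.2.1 (fun _ => h'.2.2)
  rw [heq'] at pr
  have := prof_unique pr pr' (by omega) h.2.1 (by omega) h'.2.1
  exact Prod.ext this.1 this.2

lemma card_RWs (x : Fin n → Fin 2) : (RWs x).card = (RPs x).card := by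
  apply Finset.card_image_of_injOn
  intro pq h pq' h' heq
  have heq' : rightW x pq.1 pq.2 = rightW x pq'.1 pq'.2 := heq
  rw [Finset.mem_coe, mem_RPs] at h h'
  have pr := prof_rightW x (le_of_lt h.1) h.2.1 (fun _ => h.2.2)
  have pr' := prof_rightW x (le_of_lt h'.1) h'.2.1 (fun _ => h'.2.2)
  rw [heq'] at pr
  have := prof_unique pr pr' (by omega) h.2.1 (by omega) h'.2.1
  exact Prod.ext this.1 this.2

lemma inter_card_le (x : Fin n → Fin 2) : ((LWs x) ∩ (RWs x)).card ≤ (APs x).card := by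
  have hsub : (LWs x) ∩ (RWs x) ⊆ (APs x).image fun pq => leftW x pq.1 pq.2 := by
    intro w hw
    obtain ⟨hw1, hw2⟩ := Finset.mem_inter.mp hw
    obtain ⟨pq, hpq, hwl0⟩ := Finset.mem_image.mp hw1
    obtain ⟨pq', hpq', hwr0⟩ := Finset.mem_image.mp hw2
    have hwl : leftW x pq.1 pq.2 = w := hwl0
    have hwr : rightW x pq'.1 pq'.2 = w := hwr0
    rw [mem_LPs] at hpq
    rw [mem_RPs] at hpq'
    have prL := prof_leftW x (le_of_lt hpq.1) hpq.2.1 (fun _ => hpq.2.2)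
    have prR := prof_rightW x (le_of_lt hpq'.1) hpq'.2.1 (fun _ => hpq'.2.2)
    rw [hwl] at prL
    rw [hwr] at prR
    have hpp := prof_unique prL prR (by omega) hpq.2.1 (by omega) hpq'.2.1
    have heq2 : leftW x pq.1 pq.2 = rightW x pq.1 pq.2 := by
      rw [hwl, hpp.1, hpp.2]
      exact hwr.symm
    have halt := left_eq_right_alt hpq.1 hpq.2.1 heq2
    exact Finset.mem_image.mpr ⟨pq, mem_APs.mpr ⟨hpq.1, hpq.2.1, halt⟩, hwl⟩
  exact le_trans (Finset.card_le_card hsub) (Finset.card_image_le)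

lemma APs_card_le_inter (x : Fin n → Fin 2) :
    (APs x).card ≤ ((LWs x) ∩ (RWs x)).card := by
  apply Finset.card_le_card_of_injOn (fun pq => leftW x pq.1 pq.2)
  · intro pq h
    have hA := mem_APs.mp h
    refine Finset.mem_inter.mpr ⟨Finset.mem_image_of_mem _ (APs_subset_LPs x h), ?_⟩
    show leftW x pq.1 pq.2 ∈ RWs x
    rw [alt_left_eq_right hA.1 hA.2.1 hA.2.2]
    exact Finset.mem_image_of_mem _ (APs_subset_RPs x h)
  · intro pq h pq' h' heq
    have heq' : leftW x pq.1 pq.2 = leftW x pq'.1 pq'.2 := heq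
    rw [Finset.mem_coe, mem_APs] at h h'
    have pr := prof_leftW x (le_of_lt h.1) h.2.1 (fun _ => h.2.2 pq.1 le_rfl h.1)
    have pr' := prof_leftW x (le_of_lt h'.1) h'.2.1 (fun _ => h'.2.2 pq'.1 le_rfl h'.1)
    rw [heq'] at pr
    have := prof_unique pr pr' (by omega) h.2.1 (by omega) h'.2.1
    exact Prod.ext this.1 this.2

lemma ball_cover (x : Fin n → Fin 2) :
    fllBall 2 n 1 x ⊆ insert x ((Flips x) ∪ ((LWs x) ∪ (RWs x))) := by
  intro y hy
  by_cases hxy : y = x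
  · exact hxy ▸ Finset.mem_insert_self _ _
  · obtain ⟨p, q, hpq, hqn, hcase⟩ := cover hy hxy
    refine Finset.mem_insert_of_mem ?_
    rcases hcase with ⟨h1, h2⟩ | ⟨h1, h2, h3⟩ | ⟨h1, h2, h3⟩
    · refine Finset.mem_union_left _ ?_
      subst h1
      rw [h2]
      exact Finset.mem_image_of_mem _ (Finset.mem_range.mpr hqn)
    · refine Finset.mem_union_right _ (Finset.mem_union_left _ ?_)
      rw [h3]
      exact Finset.mem_image_of_mem _ (show (p, q) ∈ LPs x from mem_LPs.mpr ⟨h1, hqn, h2⟩)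
    · refine Finset.mem_union_right _ (Finset.mem_union_right _ ?_)
      rw [h3]
      exact Finset.mem_image_of_mem _ (show (p, q) ∈ RPs x from mem_RPs.mpr ⟨h1, hqn, h2⟩)

lemma union_sub_ball (x : Fin n → Fin 2) :
    (LWs x) ∪ (RWs x) ⊆ fllBall 2 n 1 x := by
  intro w hw
  rcases Finset.mem_union.mp hw with h | h
  · obtain ⟨pq, hpq, hw⟩ := Finset.mem_image.mp h
    rw [mem_LPs] at hpq
    exact hw ▸ leftW_mem_ball x (le_of_lt hpq.1) hpq.2.1
  · obtain ⟨pq, hpq, hw⟩ := Finset.mem_image.mp h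
    rw [mem_RPs] at hpq
    exact hw ▸ rightW_mem_ball x (le_of_lt hpq.1) hpq.2.1

lemma ball_card_le (x : Fin n → Fin 2) :
    (fllBall 2 n 1 x).card + (APs x).card ≤ 1 + n + ((LPs x).card + (RPs x).card) := by
  have h1 := Finset.card_le_card (ball_cover x)
  have h2 : (insert x ((Flips x) ∪ ((LWs x) ∪ (RWs x)))).card ≤
      1 + ((Flips x).card + ((LWs x) ∪ (RWs x)).card) := by
    calc (insert x ((Flips x) ∪ ((LWs x) ∪ (RWs x)))).card
        ≤ ((Flips x) ∪ ((LWs x) ∪ (RWs x))).card + 1 := Finset.card_insert_le _ _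
      _ ≤ ((Flips x).card + ((LWs x) ∪ (RWs x)).card) + 1 := by
          exact Nat.add_le_add_right (Finset.card_union_le _ _) 1
      _ = 1 + ((Flips x).card + ((LWs x) ∪ (RWs x)).card) := by omega
  have h3 : (Flips x).card ≤ n := le_trans (Finset.card_image_le) (by simp)
  have h4 := Finset.card_union_add_card_inter (LWs x) (RWs x)
  have h5 := APs_card_le_inter x
  have h6 := card_LWs x
  have h7 := card_RWs x
  omega

lemma le_ball_card (x : Fin n → Fin 2) :
    (LPs x).card + (RPs x).card ≤ (fllBall 2 n 1 x).card + (APs x).card := by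
  have h1 := Finset.card_le_card (union_sub_ball x)
  have h4 := Finset.card_union_add_card_inter (LWs x) (RWs x)
  have h5 := inter_card_le x
  have h6 := card_LWs x
  have h7 := card_RWs x
  omega

lemma card_LPs (x : Fin n → Fin 2) :
    (LPs x).card = ∑ t ∈ Dset x, (n - 1 - t) := by
  rw [Finset.card_eq_sum_card_fiberwise (f := Prod.fst) (t := Dset x) ?_]
  · apply Finset.sum_congr rfl
    intro t ht
    have htD : t < n - 1 ∧ X x t ≠ X x (t + 1) := by
      have := Finset.mem_filter.mp ht
      exact ⟨Finset.mem_range.mp this.1, this.2⟩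
    rw [show (n - 1 - t) = (Finset.Ioo t n).card by rw [Nat.card_Ioo]; omega]
    apply Finset.card_nbij (i := Prod.snd)
    · intro pq h
      rw [Finset.mem_coe, Finset.mem_filter, mem_LPs] at h
      exact Finset.mem_Ioo.mpr ⟨h.2 ▸ h.1.1, h.1.2.1⟩
    · intro pq h pq' h' heq
      simp only [Finset.mem_coe, Finset.mem_filter] at h h'
      exact Prod.ext (h.2.trans h'.2.symm) heq
    · intro q hq
      rw [Finset.coe_filter]
      rw [Finset.mem_coe, Finset.mem_Ioo] at hq
      exact ⟨(t, q), ⟨mem_LPs.mpr ⟨hq.1, hq.2, htD.2⟩, rfl⟩, rfl⟩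
  · intro pq h
    rw [Finset.mem_coe, mem_LPs] at h
    exact Finset.mem_filter.mpr ⟨Finset.mem_range.mpr (by omega), h.2.2⟩

lemma card_RPs (x : Fin n → Fin 2) :
    (RPs x).card = ∑ t ∈ Dset x, (t + 1) := by
  rw [Finset.card_eq_sum_card_fiberwise (f := fun pq => pq.2 - 1) (t := Dset x) ?_]
  · apply Finset.sum_congr rfl
    intro t ht
    have htD : t < n - 1 ∧ X x t ≠ X x (t + 1) := by
      have := Finset.mem_filter.mp ht
      exact ⟨Finset.mem_range.mp this.1, this.2⟩
    rw [show (t + 1) = (Finset.range (t + 1)).card by rw [Finset.card_range]]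
    apply Finset.card_nbij (i := Prod.fst)
    · intro pq h
      rw [Finset.mem_coe, Finset.mem_filter, mem_RPs] at h
      refine Finset.mem_range.mpr ?_
      have := h.1.1
      omega
    · intro pq h pq' h' heq
      simp only [Finset.mem_coe, Finset.mem_filter, mem_RPs] at h h'
      refine Prod.ext heq ?_
      have h1 := h.1.1
      have h2 := h'.1.1
      have := h.2
      have := h'.2
      omega
    · intro p hp
      rw [Finset.coe_filter]
      rw [Finset.mem_coe, Finset.mem_range] at hp
      refine ⟨(p, t + 1), ⟨mem_RPs.mpr ⟨by omega, by omega, ?_⟩, by omega⟩, rfl⟩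
      show X x (t + 1 - 1) ≠ X x (t + 1)
      rw [show t + 1 - 1 = t by omega]
      exact htD.2
  · intro pq h
    rw [Finset.mem_coe, mem_RPs] at h
    show pq.2 - 1 ∈ Dset x
    refine Finset.mem_filter.mpr ⟨Finset.mem_range.mpr (by omega), ?_⟩
    show ¬ (X x (pq.2 - 1) = X x (pq.2 - 1 + 1))
    rw [show pq.2 - 1 + 1 = pq.2 by omega]
    exact h.2.2

lemma card_LPs_add_RPs (x : Fin n → Fin 2) :
    (LPs x).card + (RPs x).card = n * (Dset x).card := by
  rw [card_LPs, card_RPs, ← Finset.sum_add_distrib]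
  rw [Finset.sum_congr rfl (g := fun _ => n) ?_]
  · rw [Finset.sum_const, smul_eq_mul, mul_comm]
  · intro t ht
    have := Finset.mem_range.mp (Finset.mem_filter.mp ht).1
    show n - 1 - t + (t + 1) = n
    omega


lemma APs_lower (x : Fin n → Fin 2) (hn : 1 ≤ n) :
    n ^ 2 ≤ (n - (Dset x).card) * (2 * (APs x).card + n) := by
  classical
  set f : ℕ → ℕ := fun i =>
    ((Finset.range (n - 1)).filter fun t => X x t = X x (t + 1) ∧ t < i).card with hf
  set Z : ℕ := ((Finset.range (n - 1)).filter fun t => X x t = X x (t + 1)).card with hZ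
  have hiff : ∀ p q : ℕ, p < q → q < n →
      ((∀ k, p ≤ k → k < q → ¬ (X x k = X x (k + 1))) ↔ f p = f q) := by
    intro p q hpq hq
    have hsplit : ((Finset.range (n - 1)).filter fun t => X x t = X x (t + 1) ∧ t < q)
        = ((Finset.range (n - 1)).filter fun t => X x t = X x (t + 1) ∧ t < p)
          ∪ ((Finset.range (n - 1)).filter fun t => X x t = X x (t + 1) ∧ (p ≤ t ∧ t < q)) := by
      ext u
      simp only [Finset.mem_filter, Finset.mem_union, Finset.mem_range]
      constructor
      · rintro ⟨h1, h2, h3⟩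
        by_cases h4 : u < p
        · exact Or.inl ⟨h1, h2, h4⟩
        · exact Or.inr ⟨h1, h2, by omega, h3⟩
      · rintro (⟨h1, h2, h3⟩ | ⟨h1, h2, h3, h4⟩)
        · exact ⟨h1, h2, by omega⟩
        · exact ⟨h1, h2, h4⟩
    have hdisj : Disjoint
        ((Finset.range (n - 1)).filter fun t => X x t = X x (t + 1) ∧ t < p)
        ((Finset.range (n - 1)).filter fun t => X x t = X x (t + 1) ∧ (p ≤ t ∧ t < q)) := by
      rw [Finset.disjoint_left]
      intro u h1 h2
      simp only [Finset.mem_filter] at h1 h2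
      omega
    have hcard : f q = f p
        + ((Finset.range (n - 1)).filter fun t => X x t = X x (t + 1) ∧ (p ≤ t ∧ t < q)).card := by
      simp only [hf]
      rw [hsplit, Finset.card_union_of_disjoint hdisj]
    constructor
    · intro halt
      have he : ((Finset.range (n - 1)).filter
          fun t => X x t = X x (t + 1) ∧ (p ≤ t ∧ t < q)) = ∅ := by
        rw [Finset.eq_empty_iff_forall_notMem]
        intro u hu
        simp only [Finset.mem_filter] at hu
        exact halt u hu.2.2.1 hu.2.2.2 hu.2.1
      rw [he] at hcard
      simp at hcard
      omega
    · intro hfeq k hk1 hk2 hk3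
      have hmem : k ∈ (Finset.range (n - 1)).filter
          fun t => X x t = X x (t + 1) ∧ (p ≤ t ∧ t < q) :=
        Finset.mem_filter.mpr ⟨Finset.mem_range.mpr (by omega), hk3, hk1, hk2⟩
      have h0 : ((Finset.range (n - 1)).filter
          fun t => X x t = X x (t + 1) ∧ (p ≤ t ∧ t < q)).card = 0 := by omega
      rw [Finset.card_eq_zero, Finset.eq_empty_iff_forall_notMem] at h0
      exact h0 k hmem
  have hAP : APs x = ((Finset.range n) ×ˢ (Finset.range n)).filter
      fun pq => pq.1 < pq.2 ∧ f pq.1 = f pq.2 := by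
    ext pq
    simp only [APs, Finset.mem_filter, Finset.mem_product, Finset.mem_range]
    constructor
    · rintro ⟨⟨h1, h2⟩, h3, h4⟩
      exact ⟨⟨h1, h2⟩, h3, (hiff pq.1 pq.2 h3 h2).mp h4⟩
    · rintro ⟨⟨h1, h2⟩, h3, h4⟩
      exact ⟨⟨h1, h2⟩, h3, (hiff pq.1 pq.2 h3 h2).mpr h4⟩
  set Qs := ((Finset.range n) ×ˢ (Finset.range n)).filter fun pq => f pq.1 = f pq.2 with hQs
  have hQcard : Qs.card = 2 * (APs x).card + n := by
    have e1 : Qs.filter (fun pq => pq.1 < pq.2) = APs x := by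
      rw [hAP, hQs, Finset.filter_filter]
      apply Finset.filter_congr
      intro pq _
      exact ⟨fun ⟨a, b⟩ => ⟨b, a⟩, fun ⟨a, b⟩ => ⟨b, a⟩⟩
    have e2 : (Qs.filter fun pq => pq.2 < pq.1).card = (APs x).card := by
      apply Finset.card_nbij (i := Prod.swap)
      · intro pq h
        obtain ⟨h6, hgt⟩ := Finset.mem_filter.mp h
        obtain ⟨h7, hfeq⟩ := Finset.mem_filter.mp h6
        obtain ⟨hp1, hp2⟩ := Finset.mem_product.mp h7
        rw [hAP]
        exact Finset.mem_filter.mpr ⟨Finset.mem_product.mpr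
          ⟨by simpa using hp2, by simpa using hp1⟩, by simpa using hgt,
          by simpa using hfeq.symm⟩
      · intro a _ b _ hab
        exact Prod.swap_injective hab
      · intro pq hpq
        rw [Finset.mem_coe, hAP] at hpq
        obtain ⟨h7, hlt, hfeq⟩ := Finset.mem_filter.mp hpq
        obtain ⟨hp1, hp2⟩ := Finset.mem_product.mp h7
        refine ⟨pq.swap, ?_, Prod.swap_swap pq⟩
        rw [Finset.mem_coe]
        refine Finset.mem_filter.mpr ⟨Finset.mem_filter.mpr
          ⟨Finset.mem_product.mpr ⟨by simpa using hp2, by simpa using hp1⟩,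
            by simpa using hfeq.symm⟩, by simpa using hlt⟩
    have e3 : (Qs.filter fun pq => pq.1 = pq.2).card = n := by
      rw [show n = (Finset.range n).card from (Finset.card_range n).symm]
      apply Finset.card_nbij (i := Prod.fst)
      · intro pq h
        obtain ⟨h6, _⟩ := Finset.mem_filter.mp h
        obtain ⟨h7, _⟩ := Finset.mem_filter.mp h6
        exact (Finset.mem_product.mp h7).1
      · intro a ha b hb hab
        rw [Finset.mem_coe] at ha hb
        obtain ⟨_, he⟩ := Finset.mem_filter.mp ha
        obtain ⟨_, he'⟩ := Finset.mem_filter.mp hb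
        exact Prod.ext hab (by omega)
      · intro c hc
        rw [Finset.mem_coe, Finset.mem_range] at hc
        refine ⟨(c, c), ?_, rfl⟩
        rw [Finset.mem_coe]
        exact Finset.mem_filter.mpr ⟨Finset.mem_filter.mpr
          ⟨Finset.mem_product.mpr ⟨Finset.mem_range.mpr hc, Finset.mem_range.mpr hc⟩, rfl⟩, rfl⟩
    have hdis1 : Disjoint (Qs.filter fun pq => pq.2 < pq.1) (Qs.filter fun pq => pq.1 = pq.2) := by
      rw [Finset.disjoint_left]
      intro a h1 h2
      have := (Finset.mem_filter.mp h1).2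
      have := (Finset.mem_filter.mp h2).2
      omega
    have hdis2 : Disjoint (Qs.filter fun pq => pq.1 < pq.2)
        ((Qs.filter fun pq => pq.2 < pq.1) ∪ (Qs.filter fun pq => pq.1 = pq.2)) := by
      rw [Finset.disjoint_left]
      intro a h1 h2
      have := (Finset.mem_filter.mp h1).2
      rcases Finset.mem_union.mp h2 with h | h <;>
        · have := (Finset.mem_filter.mp h).2
          omega
    have hu : Qs = (Qs.filter fun pq => pq.1 < pq.2) ∪
        ((Qs.filter fun pq => pq.2 < pq.1) ∪ (Qs.filter fun pq => pq.1 = pq.2)) := by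
      ext pq
      constructor
      · intro h
        rcases Nat.lt_trichotomy pq.1 pq.2 with hlt | heq | hgt
        · exact Finset.mem_union_left _ (Finset.mem_filter.mpr ⟨h, hlt⟩)
        · exact Finset.mem_union_right _ (Finset.mem_union_right _ (Finset.mem_filter.mpr ⟨h, heq⟩))
        · exact Finset.mem_union_right _ (Finset.mem_union_left _ (Finset.mem_filter.mpr ⟨h, hgt⟩))
      · intro h
        rcases Finset.mem_union.mp h with h | h
        · exact (Finset.mem_filter.mp h).1
        · rcases Finset.mem_union.mp h with h | h <;> exact (Finset.mem_filter.mp h).1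
    have hcards := congrArg Finset.card hu
    rw [Finset.card_union_of_disjoint hdis2, Finset.card_union_of_disjoint hdis1, e1, e2, e3]
      at hcards
    omega
  set F := (Finset.range n).image f with hF
  set m : ℕ → ℕ := fun c => ((Finset.range n).filter fun i => f i = c).card with hm
  have hsum1 : n = ∑ c ∈ F, m c := by
    rw [show n = (Finset.range n).card from (Finset.card_range n).symm]
    exact Finset.card_eq_sum_card_fiberwise fun i hi => Finset.mem_image_of_mem f hi
  have hsum2 : Qs.card = ∑ c ∈ F, m c * m c := by
    rw [Finset.card_eq_sum_card_fiberwise (f := fun pq => f pq.1) (t := F) ?_]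
    · apply Finset.sum_congr rfl
      intro c hc
      have he : Qs.filter (fun pq => f pq.1 = c)
          = ((Finset.range n).filter fun i => f i = c) ×ˢ
            ((Finset.range n).filter fun i => f i = c) := by
        ext pq
        simp only [hQs, Finset.mem_filter, Finset.mem_product, Finset.mem_range]
        constructor
        · rintro ⟨⟨⟨h1, h2⟩, h3⟩, h4⟩
          exact ⟨⟨h1, h4⟩, h2, h3 ▸ h4⟩
        · rintro ⟨⟨h1, h2⟩, h3, h4⟩
          exact ⟨⟨⟨h1, h3⟩, h2.trans h4.symm⟩, h2⟩
      rw [he, Finset.card_product]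
    · intro pq h
      obtain ⟨h7, _⟩ := Finset.mem_filter.mp h
      exact Finset.mem_image_of_mem f (Finset.mem_product.mp h7).1
  have hCS : (∑ c ∈ F, m c * 1) ^ 2 ≤ (∑ c ∈ F, m c ^ 2) * (∑ c ∈ F, (1 : ℕ) ^ 2) :=
    Finset.sum_mul_sq_le_sq_mul_sq F (fun c => m c) 1
  have hZD : Z + (Dset x).card = n - 1 := by
    have h0 := Finset.card_filter_add_card_filter_not
      (s := Finset.range (n - 1)) (p := fun t => X x t = X x (t + 1))
    rw [Finset.card_range] at h0
    unfold Dset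
    exact h0
  have hFcard : F.card ≤ n - (Dset x).card := by
    have hFsub : F ⊆ Finset.range (Z + 1) := by
      intro c hc
      obtain ⟨i, hi, hic⟩ := Finset.mem_image.mp hc
      have hle : f i ≤ Z := by
        apply Finset.card_le_card
        intro t ht
        simp only [Finset.mem_filter] at ht ⊢
        exact ⟨ht.1, ht.2.1⟩
      rw [← hic]
      exact Finset.mem_range.mpr (by omega)
    have := Finset.card_le_card hFsub
    rw [Finset.card_range] at this
    omega
  have hmain : n ^ 2 ≤ Qs.card * F.card := by
    calc n ^ 2 = (∑ c ∈ F, m c * 1) ^ 2 := by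
          rw [show (∑ c ∈ F, m c * 1) = ∑ c ∈ F, m c by simp, ← hsum1]
      _ ≤ (∑ c ∈ F, m c ^ 2) * (∑ c ∈ F, (1 : ℕ) ^ 2) := hCS
      _ = Qs.card * F.card := by
          rw [hsum2]
          congr 1
          · apply Finset.sum_congr rfl; intro c _; rw [pow_two]
          · simp
  calc n ^ 2 ≤ Qs.card * F.card := hmain
    _ ≤ (2 * (APs x).card + n) * (n - (Dset x).card) := by
        rw [hQcard]; exact Nat.mul_le_mul_left _ hFcard
    _ = (n - (Dset x).card) * (2 * (APs x).card + n) := mul_comm _ _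


def xc (n m : ℕ) : Fin n → Fin 2 := fun i =>
  if ((i : ℕ) + (i : ℕ) / m) % 2 = 0 then 0 else 1

lemma X_xc {m i : ℕ} (hi : i < n) :
    X (xc n m) i = if (i + i / m) % 2 = 0 then 0 else 1 := by
  rw [X_lt _ hi]; rfl

lemma xc_eq_iff {m : ℕ} (hm : 1 ≤ m) {t : ℕ} (ht : t + 1 < n) :
    (X (xc n m) t = X (xc n m) (t + 1)) ↔ (m ∣ (t + 1)) := by
  rw [X_xc (by omega), X_xc ht]
  by_cases hd : m ∣ (t + 1)
  · have e : (t + 1) / m = t / m + 1 := by rw [Nat.succ_div, if_pos hd]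
    rw [e]
    have hpar : (t + t / m) % 2 = (t + 1 + (t / m + 1)) % 2 := by omega
    rw [← hpar]
    simp [hd]
  · have e : (t + 1) / m = t / m := by rw [Nat.succ_div, if_neg hd]; omega
    rw [e]
    constructor
    · intro hh
      exfalso
      by_cases c1 : (t + t / m) % 2 = 0 <;> by_cases c2 : (t + 1 + t / m) % 2 = 0
      · omega
      · rw [if_pos c1, if_neg c2] at hh; exact (by decide : (0 : Fin 2) ≠ 1) hh
      · rw [if_neg c1, if_pos c2] at hh; exact (by decide : (1 : Fin 2) ≠ 0) hh
      · omega
    · intro hh; exact absurd hh hd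

lemma Dset_xc {m : ℕ} (hm : 1 ≤ m) :
    (Dset (xc n m)).card = (n - 1) - (n - 1) / m := by
  have h1 : Dset (xc n m) = (Finset.range (n - 1)).filter (fun t => ¬ m ∣ (t + 1)) := by
    unfold Dset
    apply Finset.filter_congr
    intro t ht
    rw [Finset.mem_range] at ht
    exact not_congr (xc_eq_iff hm (by omega))
  have hsplit : Finset.range (n - 1) =
      ((Finset.range (n - 1)).filter (fun t => ¬ m ∣ (t + 1))) ∪
        ((Finset.range (n - 1)).filter (fun t => m ∣ (t + 1))) := by
    ext u
    constructor
    · intro h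
      by_cases hd : m ∣ (u + 1)
      · exact Finset.mem_union_right _ (Finset.mem_filter.mpr ⟨h, hd⟩)
      · exact Finset.mem_union_left _ (Finset.mem_filter.mpr ⟨h, hd⟩)
    · intro h
      rcases Finset.mem_union.mp h with h | h <;> exact (Finset.mem_filter.mp h).1
  have hdisj : Disjoint ((Finset.range (n - 1)).filter (fun t => ¬ m ∣ (t + 1)))
      ((Finset.range (n - 1)).filter (fun t => m ∣ (t + 1))) := by
    rw [Finset.disjoint_left]
    intro u h1' h2'
    exact (Finset.mem_filter.mp h1').2 (Finset.mem_filter.mp h2').2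
  have hcards := congrArg Finset.card hsplit
  rw [Finset.card_union_of_disjoint hdisj, Finset.card_range, Nat.card_multiples] at hcards
  rw [h1]
  exact Nat.eq_sub_of_add_eq hcards.symm

lemma APs_xc_same_block {m : ℕ} (hm : 1 ≤ m) :
    ∀ pq ∈ APs (xc n m), pq.1 / m = pq.2 / m := by
  intro pq h
  obtain ⟨h1, h2, h3⟩ := mem_APs.mp h
  by_contra hne
  have hlt : pq.1 / m < pq.2 / m :=
    lt_of_le_of_ne (Nat.div_le_div_right (le_of_lt h1)) hne
  have hd1 := Nat.div_add_mod pq.1 m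
  have hmod := Nat.mod_lt pq.1 (show 0 < m by omega)
  have hb1 : pq.1 < (pq.1 / m + 1) * m := by
    have e : (pq.1 / m + 1) * m = m * (pq.1 / m) + m := by ring
    omega
  have hb2 : (pq.1 / m + 1) * m ≤ pq.2 := by
    calc (pq.1 / m + 1) * m ≤ (pq.2 / m) * m := Nat.mul_le_mul_right _ (by omega)
      _ ≤ pq.2 := Nat.div_mul_le_self _ _
  have hdvd : m ∣ ((pq.1 / m + 1) * m - 1 + 1) := by
    rw [show (pq.1 / m + 1) * m - 1 + 1 = (pq.1 / m + 1) * m by omega]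
    exact dvd_mul_left m (pq.1 / m + 1)
  have halt := h3 ((pq.1 / m + 1) * m - 1) (by omega) (by omega)
  exact halt ((xc_eq_iff hm (by omega)).mpr hdvd)

lemma APs_xc {m : ℕ} (hm : 1 ≤ m) :
    2 * (APs (xc n m)).card ≤ (n / m + 1) * (m * (m - 1)) := by
  have hinj : (APs (xc n m)).card ≤ ((Finset.range (n / m + 1)) ×ˢ
      (((Finset.range m) ×ˢ (Finset.range m)).filter fun ab => ab.1 < ab.2)).card := by
    apply Finset.card_le_card_of_injOn (fun pq => (pq.1 / m, (pq.1 % m, pq.2 % m)))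
    · intro pq h
      obtain ⟨h1, h2, _⟩ := mem_APs.mp h
      have hsame := APs_xc_same_block hm pq h
      have hd1 := Nat.div_add_mod pq.1 m
      have hd2 := Nat.div_add_mod pq.2 m
      have hmeq : m * (pq.1 / m) = m * (pq.2 / m) := by rw [hsame]
      refine Finset.mem_product.mpr ⟨Finset.mem_range.mpr ?_, ?_⟩
      · have hdd : pq.1 / m ≤ n / m := Nat.div_le_div_right (by omega)
        show pq.1 / m < n / m + 1
        omega
      · refine Finset.mem_filter.mpr ⟨Finset.mem_product.mpr
          ⟨Finset.mem_range.mpr (Nat.mod_lt _ (by omega)),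
           Finset.mem_range.mpr (Nat.mod_lt _ (by omega))⟩, ?_⟩
        show pq.1 % m < pq.2 % m
        omega
    · intro a ha b hb hab
      have hsa := APs_xc_same_block hm a ha
      have hsb := APs_xc_same_block hm b hb
      have e1 : a.1 / m = b.1 / m := congrArg Prod.fst hab
      have e2 : a.1 % m = b.1 % m := congrArg (fun z => z.2.1) hab
      have e3 : a.2 % m = b.2 % m := congrArg (fun z => z.2.2) hab
      have hd1 := Nat.div_add_mod a.1 m
      have hd2 := Nat.div_add_mod a.2 m
      have hd3 := Nat.div_add_mod b.1 m
      have hd4 := Nat.div_add_mod b.2 m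
      have hm1 : m * (a.1 / m) = m * (b.1 / m) := by rw [e1]
      have hm2 : m * (a.2 / m) = m * (b.2 / m) := by
        rw [← hsa, ← hsb, e1]
      exact Prod.ext (by omega) (by omega)
  have hT : (((Finset.range m) ×ˢ (Finset.range m)).filter fun ab => ab.1 < ab.2).card * 2
      = m * (m - 1) := by
    have hTsum : (((Finset.range m) ×ˢ (Finset.range m)).filter fun ab => ab.1 < ab.2).card
        = ∑ b ∈ Finset.range m, b := by
      rw [Finset.card_eq_sum_card_fiberwise (f := Prod.snd) (t := Finset.range m) ?_]
      · apply Finset.sum_congr rfl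
        intro b hb
        conv_rhs => rw [← Finset.card_range b]
        apply Finset.card_nbij (i := Prod.fst)
        · intro ab h
          obtain ⟨h5, hsnd⟩ := Finset.mem_filter.mp h
          obtain ⟨h6, hlt⟩ := Finset.mem_filter.mp h5
          exact Finset.mem_range.mpr (by omega)
        · intro u hu v hv huv
          rw [Finset.mem_coe] at hu hv
          obtain ⟨_, hsu⟩ := Finset.mem_filter.mp hu
          obtain ⟨_, hsv⟩ := Finset.mem_filter.mp hv
          exact Prod.ext huv (hsu.trans hsv.symm)
        · intro u hu
          rw [Finset.mem_coe, Finset.mem_range] at hu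
          rw [Finset.mem_range] at hb
          refine ⟨(u, b), ?_, rfl⟩
          rw [Finset.mem_coe]
          exact Finset.mem_filter.mpr ⟨Finset.mem_filter.mpr ⟨Finset.mem_product.mpr
            ⟨Finset.mem_range.mpr (by omega), Finset.mem_range.mpr hb⟩, hu⟩, rfl⟩
      · intro ab h
        exact (Finset.mem_product.mp (Finset.mem_filter.mp h).1).2
    rw [hTsum, Finset.sum_range_id_mul_two]
  calc 2 * (APs (xc n m)).card
      ≤ 2 * (((Finset.range (n / m + 1)) ×ˢ
          (((Finset.range m) ×ˢ (Finset.range m)).filter fun ab => ab.1 < ab.2)).card) :=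
        Nat.mul_le_mul_left 2 hinj
    _ = (n / m + 1) * ((((Finset.range m) ×ˢ (Finset.range m)).filter
          fun ab => ab.1 < ab.2).card * 2) := by
        rw [Finset.card_product, Finset.card_range]; ring
    _ = (n / m + 1) * (m * (m - 1)) := by rw [hT]


lemma shape {n : ℕ} (hn : 1 ≤ n) :
    Real.sqrt 2 * (n : ℝ) ^ ((3 : ℝ) / 2) = (n : ℝ) * Real.sqrt (2 * n) := by
  have hn0 : (0 : ℝ) < n := by exact_mod_cast hn
  have h1 : (n : ℝ) ^ ((3 : ℝ) / 2) = (n : ℝ) * (n : ℝ) ^ ((1 : ℝ) / 2) := by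
    rw [show (3 : ℝ) / 2 = 1 + 1 / 2 by norm_num, Real.rpow_add hn0, Real.rpow_one]
  rw [h1, ← Real.sqrt_eq_rpow, Real.sqrt_mul (by norm_num : (0 : ℝ) ≤ 2)]
  ring

lemma upper_real {n : ℕ} (hn : 2 ≤ n) (x : Fin n → Fin 2) :
    ((fllBall 2 n 1 x).card : ℝ) ≤ (n : ℝ) ^ 2 - (n : ℝ) * Real.sqrt (2 * n) + 3 * n := by
  have h1 := ball_card_le x
  have h2 := card_LPs_add_RPs x
  have h3 := APs_lower x (by omega)
  have hD : (Dset x).card ≤ n - 1 := by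
    calc (Dset x).card ≤ (Finset.range (n - 1)).card :=
          Finset.card_le_card (Finset.filter_subset _ _)
      _ = n - 1 := Finset.card_range _
  set b := ((fllBall 2 n 1 x).card : ℝ) with hbdef
  set a := ((APs x).card : ℝ) with hadef
  set d := ((Dset x).card : ℝ) with hddef
  have hnR : (2 : ℝ) ≤ n := by exact_mod_cast hn
  have hdR : d ≤ (n : ℝ) - 1 := by
    rw [hddef]
    have h5 : ((Dset x).card : ℝ) ≤ ((n - 1 : ℕ) : ℝ) := by exact_mod_cast hD
    rw [Nat.cast_sub (by omega)] at h5
    simpa using h5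
  have hb : b + a ≤ 1 + n + n * d := by
    have hnat : (fllBall 2 n 1 x).card + (APs x).card ≤ 1 + n + n * (Dset x).card := by omega
    rw [hbdef, hadef, hddef]
    exact_mod_cast hnat
  have h3R : (n : ℝ) ^ 2 ≤ ((n : ℝ) - d) * (2 * a + n) := by
    have hc1 : ((n ^ 2 : ℕ) : ℝ) ≤ (((n - (Dset x).card) * (2 * (APs x).card + n) : ℕ) : ℝ) := by
      exact_mod_cast h3
    rw [Nat.cast_mul, Nat.cast_sub (by omega)] at hc1
    push_cast at hc1
    exact hc1
  set A := (n : ℝ) - d with hA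
  have hA1 : 1 ≤ A := by rw [hA]; linarith
  set s := Real.sqrt (2 * n) with hs
  have hs0 : 0 ≤ s := Real.sqrt_nonneg _
  have hsq : s ^ 2 = 2 * n := Real.sq_sqrt (by positivity)
  have h4 : 2 * A * n * s ≤ 2 * n * A ^ 2 + n ^ 2 := by
    nlinarith [sq_nonneg (s * A - n), hsq]
  have hA0 : (0 : ℝ) < A := by linarith
  have key : n * s ≤ n * A + a + 2 * n - 1 := by
    have h7 : (2 * A) * (n * s) ≤ (2 * A) * (n * A + a + 2 * n - 1) := by
      nlinarith [h4, h3R,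
        mul_nonneg (le_of_lt hA0) (show (0 : ℝ) ≤ 3 * n - 2 by linarith)]
    exact le_of_mul_le_mul_left h7 (by linarith)
  have hnd : n * d = (n : ℝ) ^ 2 - n * A := by rw [hA]; ring
  linarith [hb, key, hnd]

set_option maxHeartbeats 2000000 in
lemma lower_real {n : ℕ} (hn : 2 ≤ n) :
    (n : ℝ) ^ 2 - (n : ℝ) * Real.sqrt (2 * n) - 3 * n
      ≤ ((fllBall 2 n 1 (xc n (Nat.sqrt (2 * n)))).card : ℝ) := by
  obtain ⟨m, hm⟩ : ∃ m, Nat.sqrt (2 * n) = m := ⟨_, rfl⟩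
  rw [hm]
  have hm1 : 1 ≤ m := by rw [← hm]; exact Nat.le_sqrt.mpr (by omega)
  have t1 := le_ball_card (xc n m)
  have t2 := card_LPs_add_RPs (xc n m)
  have t3 := Dset_xc (n := n) hm1
  have t4 := APs_xc (n := n) (m := m) hm1
  set s := Real.sqrt (2 * n) with hs
  have hs0 : 0 ≤ s := Real.sqrt_nonneg _
  have hsq : s ^ 2 = 2 * n := Real.sq_sqrt (by positivity)
  have hnR : (2 : ℝ) ≤ n := by exact_mod_cast hn
  have hs2 : 2 ≤ s := by
    nlinarith [hsq, hs0]
  have hmr1 : (1 : ℝ) ≤ (m : ℝ) := by exact_mod_cast hm1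
  have hm2n_nat : m ^ 2 ≤ 2 * n := by rw [← hm]; exact Nat.sqrt_le' (2 * n)
  have hm2n : ((m : ℝ)) ^ 2 ≤ 2 * n := by exact_mod_cast hm2n_nat
  have hms : (m : ℝ) ≤ s := by nlinarith [hsq, hs0, hm2n, hmr1]
  have hsm : s < (m : ℝ) + 1 := by
    have h1nat : 2 * n < (m + 1) ^ 2 := by
      have h0 := Nat.lt_succ_sqrt' (2 * n)
      rw [hm] at h0
      simpa [Nat.succ_eq_add_one] using h0
    have h1 : (2 * n : ℝ) < ((m : ℝ) + 1) ^ 2 := by exact_mod_cast h1nat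
    nlinarith [hsq, hs0, h1, hmr1]
  have hm0 : (0 : ℝ) < m := by linarith
  have hD : ((Dset (xc n m)).card : ℝ) = ((n - 1 : ℕ) : ℝ) - (((n - 1) / m : ℕ) : ℝ) := by
    rw [t3, Nat.cast_sub (Nat.div_le_self _ _)]
  have hn1 : ((n - 1 : ℕ) : ℝ) = (n : ℝ) - 1 := by
    rw [Nat.cast_sub (by omega)]; simp
  have hdiv1 : (((n - 1) / m : ℕ) : ℝ) ≤ s / 2 + 1 := by
    calc (((n - 1) / m : ℕ) : ℝ) ≤ ((n - 1 : ℕ) : ℝ) / (m : ℝ) := Nat.cast_div_le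
      _ ≤ (n : ℝ) / m := by
          gcongr
          omega
      _ ≤ s / 2 + 1 := by
          rw [div_le_iff₀ hm0]
          nlinarith [hsm, hs2, hsq,
            mul_nonneg (show (0 : ℝ) ≤ s / 2 + 1 by linarith)
              (show (0 : ℝ) ≤ (m : ℝ) - (s - 1) by linarith)]
  have hdiv2 : ((n / m : ℕ) : ℝ) * ((m : ℝ)) ≤ n := by
    exact_mod_cast Nat.div_mul_le_self n m
  have hAPr0 : 2 * ((APs (xc n m)).card : ℝ)
      ≤ (((n / m : ℕ) : ℝ) + 1) * ((m : ℝ) * (((m - 1 : ℕ) : ℝ))) := by exact_mod_cast t4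
  have hm1c : ((m - 1 : ℕ) : ℝ) = (m : ℝ) - 1 := by
    rw [Nat.cast_sub hm1]; simp
  rw [hm1c] at hAPr0
  have hAPr := hAPr0
  have hAP2 : 2 * ((APs (xc n m)).card : ℝ) ≤ (n : ℝ) * (s - 1) + 2 * n := by
    have hx2 : (0 : ℝ) ≤ (m : ℝ) - 1 := by linarith
    have h1 : (((n / m : ℕ) : ℝ) + 1) * ((m : ℝ) * ((m : ℝ) - 1))
        = (((n / m : ℕ) : ℝ) * (m : ℝ)) * ((m : ℝ) - 1) + (m : ℝ) * ((m : ℝ) - 1) := by ring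
    have h2 : (((n / m : ℕ) : ℝ) * (m : ℝ)) * ((m : ℝ) - 1) ≤ (n : ℝ) * ((m : ℝ) - 1) :=
      mul_le_mul_of_nonneg_right hdiv2 hx2
    have h3 : (n : ℝ) * ((m : ℝ) - 1) ≤ (n : ℝ) * (s - 1) :=
      mul_le_mul_of_nonneg_left (by linarith) (by positivity)
    have h4 : (m : ℝ) * ((m : ℝ) - 1) ≤ 2 * n := by nlinarith [hm2n, hmr1]
    linarith [hAPr]
  have hball : (n : ℝ) * ((Dset (xc n m)).card : ℝ)
      ≤ ((fllBall 2 n 1 (xc n m)).card : ℝ) + ((APs (xc n m)).card : ℝ) := by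
    have hnat : n * (Dset (xc n m)).card
        ≤ (fllBall 2 n 1 (xc n m)).card + (APs (xc n m)).card := by omega
    exact_mod_cast hnat
  have hnd : (n : ℝ) ^ 2 - 2 * n - n * (s / 2 + 1) + n
      ≤ (n : ℝ) * ((Dset (xc n m)).card : ℝ) := by
    rw [hD, hn1]
    have h5 := mul_le_mul_of_nonneg_left hdiv1 (show (0 : ℝ) ≤ n by positivity)
    nlinarith [h5]
  linarith [hball, hnd, hAP2]

end FLL1

/-- The maximum size of a binary FLL `1`-ball is
`n² - √2·n^{3/2} + O(n)`. -/
theorem max_fll_ball_binary_asymptotic :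
    ∃ C : ℝ, 0 < C ∧ ∃ N : ℕ, ∀ n : ℕ, N ≤ n →
      |(((Finset.univ.sup fun x : Fin n → Fin 2 => (fllBall 2 n 1 x).card) : ℕ) : ℝ)
          - ((n : ℝ) ^ 2 - Real.sqrt 2 * (n : ℝ) ^ ((3 : ℝ) / 2))| ≤ C * n := by


  refine ⟨3, by norm_num, 2, fun n hn => ?_⟩
  have hsh := FLL1.shape (n := n) (by omega)
  have hub : (((Finset.univ.sup fun x : Fin n → Fin 2 => (fllBall 2 n 1 x).card) : ℕ) : ℝ)
      ≤ (n : ℝ) ^ 2 - (n : ℝ) * Real.sqrt (2 * n) + 3 * n := by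
    obtain ⟨x, _, hxS⟩ := Finset.exists_mem_eq_sup Finset.univ Finset.univ_nonempty
      (fun x : Fin n → Fin 2 => (fllBall 2 n 1 x).card)
    rw [hxS]
    exact FLL1.upper_real hn x
  have hlb : (n : ℝ) ^ 2 - (n : ℝ) * Real.sqrt (2 * n) - 3 * n
      ≤ (((Finset.univ.sup fun x : Fin n → Fin 2 => (fllBall 2 n 1 x).card) : ℕ) : ℝ) := by
    have h1 := Finset.le_sup (f := fun x : Fin n → Fin 2 => (fllBall 2 n 1 x).card)
      (Finset.mem_univ (FLL1.xc n (Nat.sqrt (2 * n))))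
    calc (n : ℝ) ^ 2 - (n : ℝ) * Real.sqrt (2 * n) - 3 * n
        ≤ ((fllBall 2 n 1 (FLL1.xc n (Nat.sqrt (2 * n)))).card : ℝ) := FLL1.lower_real hn
      _ ≤ _ := by exact_mod_cast h1
  rw [hsh, abs_le]
  constructor <;> linarith
end

section
/- Let q ≥ 2 and n ≥ 2 be integers. For x drawn uniformly at random from Z_q^n, the expected value of the sum of the lengths of the maximal alternating segments of x satisfies E_x[ Σ_{i=1}^{A(x)} s_i ] = n + (n−2)·(q−1)(q−2)/q². -/
open scoped Classical

/-! ### Auxiliary development -/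

section AuxAlt

variable {α : Type*} [Inhabited α]

/-- `AltOn l i j`: the block `l_i ⋯ l_j` is alternating, phrased directly on `l`. -/
def AltOn (l : List α) (i j : ℕ) : Prop :=
  (∀ t, i ≤ t → t + 1 ≤ j → l[t]! ≠ l[t+1]!) ∧ (∀ t, i ≤ t → t + 2 ≤ j → l[t]! = l[t+2]!)

lemma altOn_refl (l : List α) (t : ℕ) : AltOn l t t :=
  ⟨fun _ h1 h2 => absurd h2 (by omega), fun _ h1 h2 => absurd h2 (by omega)⟩

lemma altOn_mono {l : List α} {i j i' j' : ℕ} (h : AltOn l i j) (hi : i ≤ i') (hj : j' ≤ j) :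
    AltOn l i' j' :=
  ⟨fun t ht htj => h.1 t (by omega) (by omega), fun t ht htj => h.2 t (by omega) (by omega)⟩

lemma altOn_union {l : List α} {i1 j1 i2 j2 : ℕ} (h1 : AltOn l i1 j1) (h2 : AltOn l i2 j2)
    (hii : i1 ≤ i2) (hov : i2 < j1) (hjj : j1 ≤ j2) : AltOn l i1 j2 := by
  constructor
  · intro t ht htj
    by_cases hc : t + 1 ≤ j1
    · exact h1.1 t ht hc
    · exact h2.1 t (by omega) htj
  · intro t ht htj
    by_cases hc : t + 2 ≤ j1
    · exact h1.2 t ht hc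
    · exact h2.2 t (by omega) htj

lemma altOn_extend_right {l : List α} {i j : ℕ} (h : AltOn l i j) (hij : i ≤ j)
    (hne : l[j]! ≠ l[j+1]!) (hper : i = j ∨ l[j-1]! = l[j+1]!) : AltOn l i (j+1) := by
  constructor
  · intro t ht htj
    rcases Nat.lt_or_ge (t+1) (j+1) with h'|h'
    · exact h.1 t ht (by omega)
    · have he : t = j := by omega
      subst he; exact hne
  · intro t ht htj
    rcases Nat.lt_or_ge (t+2) (j+1) with h'|h'
    · exact h.2 t ht (by omega)
    · have ht2 : t + 2 = j + 1 := by omega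
      rcases hper with h''|h''
      · exact absurd ht (by omega)
      · have ht1 : t = j - 1 := by omega
        rw [ht2, ht1]; exact h''

lemma blockSeg_length (l : List α) (i j : ℕ) (hij : i ≤ j) (hj : j < l.length) :
    (blockSeg l i j).length = j + 1 - i := by
  simp only [blockSeg, List.length_take, List.length_drop]
  omega

lemma blockSeg_get (l : List α) (i j t : ℕ) (h : t < (blockSeg l i j).length) :
    (blockSeg l i j).get ⟨t, h⟩ = l[i + t]! := by
  have hlen : t < l.length - i := by
    simp only [blockSeg, List.length_take, List.length_drop] at h; omega
  rw [List.get_eq_getElem, getElem!_pos l (i+t) (by omega)]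
  simp only [blockSeg]
  rw [List.getElem_take, List.getElem_drop]

lemma isAltList_blockSeg_iff (l : List α) (i j : ℕ) (hij : i ≤ j) (hj : j < l.length) :
    IsAltList (blockSeg l i j) ↔ AltOn l i j := by
  have hlen : (blockSeg l i j).length = j + 1 - i := blockSeg_length l i j hij hj
  constructor
  · rintro ⟨h1, h2⟩
    constructor
    · intro t ht htj
      have hk : (t - i) + 1 < (blockSeg l i j).length := by omega
      have := h1 (t - i) hk
      rw [blockSeg_get, blockSeg_get] at this
      have e1 : i + (t - i) = t := by omega
      have e2 : i + (t - i + 1) = t + 1 := by omega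
      rwa [e1, e2] at this
    · intro t ht htj
      have hk : (t - i) + 2 < (blockSeg l i j).length := by omega
      have := h2 (t - i) hk
      rw [blockSeg_get, blockSeg_get] at this
      have e1 : i + (t - i) = t := by omega
      have e2 : i + (t - i + 2) = t + 2 := by omega
      rwa [e1, e2] at this
  · rintro ⟨h1, h2⟩
    constructor
    · intro t ht
      rw [blockSeg_get, blockSeg_get]
      have := h1 (i + t) (by omega) (by omega)
      rwa [show i + t + 1 = i + (t + 1) from by omega] at this
    · intro t ht
      rw [blockSeg_get, blockSeg_get]
      have := h2 (i + t) (by omega) (by omega)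
      rwa [show i + t + 2 = i + (t + 2) from by omega] at this

/-- Reformulation of `IsMaxAltSeg` via `AltOn`. -/
def MaxAltOn (l : List α) (i j : ℕ) : Prop :=
  i ≤ j ∧ j < l.length ∧ AltOn l i j ∧ (i = 0 ∨ ¬ AltOn l (i-1) j) ∧
    (j = l.length - 1 ∨ ¬ AltOn l i (j+1))

lemma isMaxAltSeg_iff (l : List α) (i j : ℕ) : IsMaxAltSeg l i j ↔ MaxAltOn l i j := by
  constructor
  · rintro ⟨h1, h2, h3, h4, h5⟩
    refine ⟨h1, h2, (isAltList_blockSeg_iff l i j h1 h2).1 h3, ?_, ?_⟩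
    · rcases h4 with h|h
      · exact Or.inl h
      · exact Or.inr fun hc => h ((isAltList_blockSeg_iff l (i-1) j (by omega) h2).2 hc)
    · rcases h5 with h|h
      · exact Or.inl h
      · by_cases hj : j = l.length - 1
        · exact Or.inl hj
        · exact Or.inr fun hc => h ((isAltList_blockSeg_iff l i (j+1) (by omega) (by omega)).2 hc)
  · rintro ⟨h1, h2, h3, h4, h5⟩
    refine ⟨h1, h2, (isAltList_blockSeg_iff l i j h1 h2).2 h3, ?_, ?_⟩
    · rcases h4 with h|h
      · exact Or.inl h
      · exact Or.inr fun hc => h ((isAltList_blockSeg_iff l (i-1) j (by omega) h2).1 hc)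
    · rcases h5 with h|h
      · exact Or.inl h
      · by_cases hj : j = l.length - 1
        · exact Or.inl hj
        · exact Or.inr fun hc => h ((isAltList_blockSeg_iff l i (j+1) (by omega) (by omega)).1 hc)

lemma mem_maxAltSegs_iff (l : List α) (p : ℕ × ℕ) :
    p ∈ maxAltSegs l ↔ MaxAltOn l p.1 p.2 := by
  unfold maxAltSegs
  simp only [Finset.mem_filter, Finset.mem_product, Finset.mem_range]
  constructor
  · rintro ⟨_, h⟩; exact (isMaxAltSeg_iff _ _ _).1 h
  · intro h
    refine ⟨⟨?_, h.2.1⟩, (isMaxAltSeg_iff _ _ _).2 h⟩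
    have := h.1; have := h.2.1; omega

lemma exists_left_max (l : List α) (t : ℕ) :
    ∃ i, i ≤ t ∧ AltOn l i t ∧ ∀ i', AltOn l i' t → i ≤ i' := by
  classical
  set P : ℕ → Prop := fun d => AltOn l (t - d) t with hP
  have hP0 : P 0 := by simpa [hP] using altOn_refl l t
  set d0 := Nat.findGreatest P t with hd0
  have hPd0 : P d0 := Nat.findGreatest_spec (Nat.zero_le t) hP0
  refine ⟨t - d0, by omega, hPd0, ?_⟩
  intro i' hi'
  by_contra hc
  push_neg at hc
  have hd0t : d0 ≤ t := Nat.findGreatest_le t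
  have hi't : i' < t - d0 := hc
  have : ¬ P (t - i') := Nat.findGreatest_is_greatest (n := t) (by omega) (by omega)
  exact this (by simpa [hP, show t - (t - i') = i' from by omega] using hi')

lemma exists_right_max (l : List α) (i t : ℕ) (ht : t < l.length) (h : AltOn l i t) :
    ∃ j, t ≤ j ∧ j < l.length ∧ AltOn l i j ∧ ∀ j', j' < l.length → AltOn l i j' → j' ≤ j := by
  classical
  set Q : ℕ → Prop := fun j => t ≤ j ∧ j < l.length ∧ AltOn l i j with hQ
  have hQt : Q t := ⟨le_rfl, ht, h⟩
  set j0 := Nat.findGreatest Q l.length with hj0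
  have hQj0 : Q j0 := Nat.findGreatest_spec (by omega) hQt
  refine ⟨j0, hQj0.1, hQj0.2.1, hQj0.2.2, ?_⟩
  intro j' hj' haj'
  by_contra hc
  push_neg at hc
  have : ¬ Q j' := Nat.findGreatest_is_greatest (n := l.length) (by omega) (by omega)
  exact this ⟨by omega, hj', haj'⟩

lemma exists_maxAltOn (l : List α) (t : ℕ) (ht : t < l.length) :
    ∃ i j, MaxAltOn l i j ∧ i ≤ t ∧ t ≤ j := by
  obtain ⟨i, hit, hai, hmin⟩ := exists_left_max l t
  obtain ⟨j, htj, hjl, haj, hmax⟩ := exists_right_max l i t ht hai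
  refine ⟨i, j, ⟨by omega, hjl, haj, ?_, ?_⟩, hit, htj⟩
  · by_cases hi0 : i = 0
    · exact Or.inl hi0
    · refine Or.inr fun hc => ?_
      have : AltOn l (i-1) t := altOn_mono hc le_rfl (by omega)
      have := hmin (i-1) this
      omega
  · by_cases hj : j = l.length - 1
    · exact Or.inl hj
    · refine Or.inr fun hc => ?_
      have := hmax (j+1) (by omega) hc
      omega

lemma maxAltOn_overlap {l : List α} {i1 j1 i2 j2 : ℕ}
    (h1 : MaxAltOn l i1 j1) (h2 : MaxAltOn l i2 j2)
    (hle : i1 ≤ i2) (hov : i2 ≤ j1) (hne : (i1, j1) ≠ (i2, j2)) :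
    i1 < i2 ∧ j1 = i2 ∧ j1 < j2 := by
  obtain ⟨hij1, hjl1, ha1, hl1, hr1⟩ := h1
  obtain ⟨hij2, hjl2, ha2, hl2, hr2⟩ := h2
  have hii : i1 < i2 := by
    rcases Nat.lt_or_ge i1 i2 with h|h
    · exact h
    · exfalso
      have hieq : i1 = i2 := by omega
      subst hieq
      have hjj : j1 ≠ j2 := fun h => hne (by rw [h])
      rcases Nat.lt_or_ge j1 j2 with hj|hj
      · have hext : AltOn l i1 (j1 + 1) := altOn_mono ha2 le_rfl (by omega)
        rcases hr1 with h'|h'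
        · omega
        · exact h' hext
      · have hj2 : j2 < j1 := by omega
        have hext : AltOn l i1 (j2 + 1) := altOn_mono ha1 le_rfl (by omega)
        rcases hr2 with h'|h'
        · omega
        · exact h' hext
  have hjj : j1 < j2 := by
    rcases Nat.lt_or_ge j1 j2 with h|h
    · exact h
    · exfalso
      have : AltOn l (i2 - 1) j2 := altOn_mono ha1 (by omega) (by omega)
      rcases hl2 with h'|h'
      · omega
      · exact h' this
  refine ⟨hii, ?_, hjj⟩
  rcases Nat.lt_or_ge i2 j1 with h|h
  · exfalso
    have hu : AltOn l i1 j2 := altOn_union ha1 ha2 hle h (by omega)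
    have hext : AltOn l i1 (j1 + 1) := altOn_mono hu le_rfl (by omega)
    rcases hr1 with h'|h'
    · omega
    · exact h' hext
  · omega

/-- The overlap condition at position `t`. -/
def OvCond (l : List α) (t : ℕ) : Prop :=
  1 ≤ t ∧ t + 1 < l.length ∧ l[t-1]! ≠ l[t]! ∧ l[t]! ≠ l[t+1]! ∧ l[t-1]! ≠ l[t+1]!

lemma ovCond_of_two {l : List α} {t i j i' j' : ℕ}
    (h1 : MaxAltOn l i j) (h2 : MaxAltOn l i' j') (hle : i ≤ i')
    (hne : (i, j) ≠ (i', j'))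
    (hc1 : i ≤ t) (hc2 : t ≤ j) (hc3 : i' ≤ t) (hc4 : t ≤ j') : OvCond l t := by
  obtain ⟨hii, hji, hjj⟩ := maxAltOn_overlap h1 h2 hle (by omega) hne
  -- then t = j = i'
  have htj : t = j := by omega
  subst htj
  have hd1 : l[t-1]! ≠ l[t]! := by
    have := h1.2.2.1.1 (t-1) (by omega) (by omega)
    rwa [show t - 1 + 1 = t from by omega] at this
  have hd2 : l[t]! ≠ l[t+1]! := by
    have := h2.2.2.1.1 t (by omega) (by omega)
    exact this
  have htl : t + 1 < l.length := by
    have := h2.2.1; omega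
  refine ⟨by omega, htl, hd1, hd2, ?_⟩
  intro heq
  have hext : AltOn l i (t+1) :=
    altOn_extend_right h1.2.2.1 (by omega) hd2 (Or.inr heq)
  rcases h1.2.2.2.2 with h'|h'
  · omega
  · exact h' hext

lemma segsContaining (l : List α) (t : ℕ) (ht : t < l.length) :
    ((maxAltSegs l).filter fun p => p.1 ≤ t ∧ t ≤ p.2).card
      = 1 + (if OvCond l t then 1 else 0) := by
  classical
  set S := (maxAltSegs l).filter fun p => p.1 ≤ t ∧ t ≤ p.2 with hS
  have hmem : ∀ p : ℕ × ℕ, p ∈ S ↔ MaxAltOn l p.1 p.2 ∧ p.1 ≤ t ∧ t ≤ p.2 := by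
    intro p
    simp only [hS, Finset.mem_filter, mem_maxAltSegs_iff, and_assoc]
  by_cases hcond : OvCond l t
  · obtain ⟨ht1, ht2, hd1, hd2, hd3⟩ := hcond
    -- construct the left segment sA = (iA, t)
    obtain ⟨iA, hiAt, haiA, hminA⟩ := exists_left_max l t
    have hA1t : AltOn l (t-1) t := by
      refine ⟨fun t' h1 h2 => ?_, fun t' h1 h2 => absurd h2 (by omega)⟩
      have e2 : t' + 1 = t := by omega
      have e1 : t' = t - 1 := by omega
      rw [e2, e1]; exact hd1
    have hiA : iA ≤ t - 1 := hminA (t-1) hA1t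
    have hsA : MaxAltOn l iA t := by
      refine ⟨by omega, ht, haiA, ?_, ?_⟩
      · by_cases hi0 : iA = 0
        · exact Or.inl hi0
        · refine Or.inr fun hc => ?_
          have := hminA (iA - 1) (altOn_mono hc le_rfl le_rfl)
          omega
      · refine Or.inr fun hc => ?_
        have := hc.2 (t-1) (by omega) (by omega)
        rw [show t - 1 + 2 = t + 1 from by omega] at this
        exact hd3 this
    -- construct the right segment sB = (t, jB)
    have hatt1 : AltOn l t (t+1) := by
      refine ⟨fun t' h1 h2 => ?_, fun t' h1 h2 => absurd h2 (by omega)⟩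
      have e1 : t' = t := by omega
      rw [e1]; exact hd2
    obtain ⟨jB, htjB, hjBl, hajB, hmaxB⟩ := exists_right_max l t (t+1) ht2 hatt1
    have hjB1 : t + 1 ≤ jB := htjB
    have hsB : MaxAltOn l t jB := by
      refine ⟨by omega, hjBl, altOn_mono hajB le_rfl (by omega), ?_, ?_⟩
      · refine Or.inr fun hc => ?_
        have := hc.2 (t-1) (by omega) (by omega)
        rw [show t - 1 + 2 = t + 1 from by omega] at this
        exact hd3 this
      · by_cases hj : jB = l.length - 1
        · exact Or.inl hj
        · refine Or.inr fun hc => ?_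
          have := hmaxB (jB + 1) (by omega) hc
          omega
    have hSeq : S = {(iA, t), (t, jB)} := by
      ext p
      rw [hmem]
      constructor
      · rintro ⟨hp, hpt1, hpt2⟩
        simp only [Finset.mem_insert, Finset.mem_singleton]
        by_cases hpA : p = (iA, t)
        · exact Or.inl hpA
        · right
          obtain ⟨i, j⟩ := p
          have hij : i ≤ j := hp.1
          have hne : (i, j) ≠ (iA, t) := hpA
          -- compare with sA
          have hiAi : iA < i := by
            by_contra hcc
            push_neg at hcc
            obtain ⟨h1, h2, h3⟩ := maxAltOn_overlap hp hsA hcc (by omega) hne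
            omega
          obtain ⟨h1, h2, h3⟩ := maxAltOn_overlap hsA hp (by omega) (by omega) (by
            intro hcc
            have : iA = i := congrArg Prod.fst hcc
            omega)
          -- h2 : t = i, h3 : t < j
          have hti : i = t := by omega
          subst hti
          -- now compare with sB
          by_contra hpB
          have hneB : (i, j) ≠ (i, jB) := hpB
          rcases Nat.lt_or_ge j jB with hj|hj
          · obtain ⟨hh, _, _⟩ := maxAltOn_overlap hp hsB le_rfl (by omega) hneB
            omega
          · obtain ⟨hh, _, _⟩ := maxAltOn_overlap hsB hp le_rfl (by omega)
              (fun hcc => hneB hcc.symm)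
            omega
      · intro hp
        simp only [Finset.mem_insert, Finset.mem_singleton] at hp
        rcases hp with h|h
        · rw [h]; exact ⟨hsA, by omega, le_rfl⟩
        · rw [h]; exact ⟨hsB, le_rfl, by omega⟩
    rw [hSeq, if_pos ⟨ht1, ht2, hd1, hd2, hd3⟩]
    rw [Finset.card_pair (by intro hcc; have := congrArg Prod.fst hcc; simp at this; omega)]
  · -- unique segment through t
    obtain ⟨i0, j0, hm0, hc0⟩ := exists_maxAltOn l t ht
    have huniq : ∀ p ∈ S, p = (i0, j0) := by
      intro p hp
      rw [hmem] at hp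
      obtain ⟨hp1, hp2, hp3⟩ := hp
      by_contra hne
      rcases le_total p.1 i0 with hle|hle
      · exact hcond (ovCond_of_two hp1 hm0 hle
          (by intro hcc; exact hne (Prod.ext (congrArg Prod.fst hcc) (congrArg Prod.snd hcc)))
          hp2 hp3 hc0.1 hc0.2)
      · refine hcond (ovCond_of_two hm0 hp1 hle ?_ hc0.1 hc0.2 hp2 hp3)
        intro hcc
        exact hne (Prod.ext (congrArg Prod.fst hcc).symm (congrArg Prod.snd hcc).symm)
    have hmem0 : (i0, j0) ∈ S := by rw [hmem]; exact ⟨hm0, hc0.1, hc0.2⟩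
    rw [if_neg hcond]
    rw [Finset.card_eq_one]
    exact ⟨(i0, j0), Finset.eq_singleton_iff_unique_mem.2 ⟨hmem0, huniq⟩⟩

lemma segLenSum_eq (l : List α) :
    segLenSum l = l.length + ∑ t ∈ Finset.range l.length, (if OvCond l t then 1 else 0) := by
  classical
  unfold segLenSum
  have key : ∀ p ∈ maxAltSegs l,
      p.2 + 1 - p.1 = ∑ t ∈ Finset.range l.length, (if p.1 ≤ t ∧ t ≤ p.2 then 1 else 0) := by
    intro p hp
    have h := (mem_maxAltSegs_iff l p).1 hp
    have hfil : ((Finset.range l.length).filter fun t => p.1 ≤ t ∧ t ≤ p.2)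
        = Finset.Icc p.1 p.2 := by
      ext t
      simp only [Finset.mem_filter, Finset.mem_range, Finset.mem_Icc]
      have := h.2.1
      omega
    rw [← Finset.card_filter, hfil, Nat.card_Icc]
  rw [Finset.sum_congr rfl key, Finset.sum_comm]
  have inner : ∀ t ∈ Finset.range l.length,
      ∑ p ∈ maxAltSegs l, (if p.1 ≤ t ∧ t ≤ p.2 then 1 else 0)
        = 1 + (if OvCond l t then 1 else 0) := by
    intro t htl
    rw [Finset.mem_range] at htl
    rw [← Finset.card_filter]
    exact segsContaining l t htl
  rw [Finset.sum_congr rfl inner, Finset.sum_add_distrib, Finset.sum_const, Finset.card_range,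
    smul_eq_mul, mul_one]

lemma segLenSum_cons (a : α) (l : List α) (hl : 2 ≤ l.length) :
    segLenSum (a :: l)
      = 1 + (if a ≠ l[0]! ∧ l[0]! ≠ l[1]! ∧ a ≠ l[1]! then 1 else 0) + segLenSum l := by
  classical
  obtain ⟨m, hm⟩ : ∃ m, l.length = m + 1 := ⟨l.length - 1, by omega⟩
  rw [segLenSum_eq (a :: l), segLenSum_eq l]
  simp only [List.length_cons, hm]
  rw [Finset.sum_range_succ' (fun t => if OvCond (a :: l) t then 1 else 0) (m+1)]
  rw [Finset.sum_range_succ' (fun t => if OvCond (a :: l) (t+1) then 1 else 0) m]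
  rw [Finset.sum_range_succ' (fun t => if OvCond l t then 1 else 0) m]
  have h00 : (if OvCond (a :: l) 0 then 1 else 0) = 0 := by
    rw [if_neg]; intro h; exact absurd h.1 (by omega)
  have h0l : (if OvCond l 0 then 1 else 0) = 0 := by
    rw [if_neg]; intro h; exact absurd h.1 (by omega)
  have h1 : (if OvCond (a :: l) (0+1) then 1 else 0)
      = (if a ≠ l[0]! ∧ l[0]! ≠ l[1]! ∧ a ≠ l[1]! then 1 else 0) := by
    apply if_congr _ rfl rfl
    unfold OvCond
    simp only [List.length_cons, Nat.add_sub_cancel, List.getElem!_cons_succ, List.getElem!_cons_zero, hm]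
    constructor
    · rintro ⟨_, _, h1, h2, h3⟩; exact ⟨h1, h2, h3⟩
    · rintro ⟨h1, h2, h3⟩; exact ⟨by omega, by omega, h1, h2, h3⟩
  have hsh : ∀ k, (if OvCond (a :: l) (k+1+1) then 1 else 0)
      = (if OvCond l (k+1) then 1 else 0) := by
    intro k
    apply if_congr _ rfl rfl
    unfold OvCond
    simp only [List.length_cons, Nat.add_sub_cancel, List.getElem!_cons_succ, hm]
    constructor
    · rintro ⟨_, h0, h1, h2, h3⟩
      exact ⟨by omega, by omega, h1, h2, h3⟩
    · rintro ⟨_, h0, h1, h2, h3⟩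
      exact ⟨by omega, by omega, h1, h2, h3⟩
  rw [h00, h0l, h1]
  rw [Finset.sum_congr rfl (fun k _ => hsh k)]
  omega

end AuxAlt


section Counting

variable {q : ℕ}

lemma count_ne (d : Fin q) : (∑ b : Fin q, if b ≠ d then (1:ℕ) else 0) = q - 1 := by
  classical
  have h1 : (∑ b : Fin q, if b = d then (1:ℕ) else 0) = 1 := by
    simp [Finset.sum_ite_eq']
  have h2 : (∑ b : Fin q, ((if b ≠ d then (1:ℕ) else 0) + (if b = d then 1 else 0)))
      = ∑ _b : Fin q, 1 := by
    apply Finset.sum_congr rfl; intro b _; by_cases h : b = d <;> simp [h]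
  rw [Finset.sum_add_distrib, h1] at h2
  have h3 : (∑ _b : Fin q, (1:ℕ)) = q := by simp
  omega

lemma count_trip (b c : Fin q) :
    (∑ a : Fin q, if a ≠ b ∧ b ≠ c ∧ a ≠ c then (1:ℕ) else 0)
      = if b ≠ c then q - 2 else 0 := by
  classical
  by_cases hbc : b = c
  · simp [hbc]
  · rw [if_pos hbc]
    have h2 : (∑ a : Fin q, if a = b ∨ a = c then (1:ℕ) else 0) = 2 := by
      rw [← Finset.card_filter]
      have : (Finset.univ.filter fun a : Fin q => a = b ∨ a = c) = {b, c} := by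
        ext a; simp [Finset.mem_insert]
      rw [this]
      exact Finset.card_pair hbc
    have h4 : (∑ a : Fin q,
        ((if a ≠ b ∧ b ≠ c ∧ a ≠ c then (1:ℕ) else 0) + (if a = b ∨ a = c then 1 else 0)))
        = ∑ _a : Fin q, 1 := by
      apply Finset.sum_congr rfl; intro a _
      by_cases h : a = b ∨ a = c
      · rw [if_pos h, if_neg (by tauto)]
      · rw [if_neg h, if_pos (by tauto)]
    rw [Finset.sum_add_distrib, h2] at h4
    have h3 : (∑ _a : Fin q, (1:ℕ)) = q := by simp
    have hq2 : 2 ≤ q := by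
      have := Fintype.card_le_of_injective (fun x : Bool => if x then b else c)
        (by intro x y hxy; cases x <;> cases y <;> simp_all)
      simpa using this
    omega

lemma getElem!_ofFn {k : ℕ} [Inhabited (Fin q)] (z : Fin k → Fin q) (i : ℕ) (h : i < k) :
    (List.ofFn z)[i]! = z ⟨i, h⟩ := by
  rw [getElem!_pos (List.ofFn z) i (by simpa using h), List.getElem_ofFn]

lemma ofFn_cons {k : ℕ} (b : Fin q) (z : Fin k → Fin q) :
    List.ofFn (Fin.cons b z : Fin (k+1) → Fin q) = b :: List.ofFn z := by
  rw [List.ofFn_succ]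
  simp [Fin.cons_succ]

lemma count_headpair (m : ℕ) :
    (∑ z : Fin (m+2) → Fin q, if z ⟨0, by omega⟩ ≠ z ⟨1, by omega⟩ then (1:ℕ) else 0)
      = (q-1) * q^(m+1) := by
  classical
  rw [← Equiv.sum_comp (Fin.consEquiv (fun _ : Fin (m+2) => Fin q))]
  rw [Fintype.sum_prod_type]
  have hterm : ∀ (b : Fin q) (z : Fin (m+1) → Fin q),
      (if (Fin.consEquiv (fun _ : Fin (m+2) => Fin q)) (b, z) ⟨0, by omega⟩
          ≠ (Fin.consEquiv (fun _ : Fin (m+2) => Fin q)) (b, z) ⟨1, by omega⟩ then (1:ℕ) else 0)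
        = if b ≠ z ⟨0, by omega⟩ then 1 else 0 := by
    intro b z
    have e0 : (Fin.cons b z : ∀ _ : Fin (m+2), Fin q) ⟨0, by omega⟩ = b := rfl
    have e1 : (Fin.cons b z : ∀ _ : Fin (m+2), Fin q) ⟨1, by omega⟩ = z ⟨0, by omega⟩ := rfl
    simp only [Fin.consEquiv_apply, e0, e1]
  rw [Finset.sum_congr rfl (fun b _ => Finset.sum_congr rfl (fun z _ => hterm b z))]
  rw [Finset.sum_comm]
  have hinner : ∀ z : Fin (m+1) → Fin q,
      (∑ b : Fin q, if b ≠ z ⟨0, by omega⟩ then (1:ℕ) else 0) = q - 1 :=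
    fun z => count_ne _
  rw [Finset.sum_congr rfl (fun z _ => hinner z), Finset.sum_const]
  simp [Fintype.card_fun, mul_comm]

lemma T_formula (hq : 2 ≤ q) (n : ℕ) (hn : 2 ≤ n) :
    (∑ x : Fin n → Fin q, segLenSum (List.ofFn x))
      = n * q^n + (n-2) * ((q-1)*(q-2)) * q^(n-2) := by
  haveI : Inhabited (Fin q) := ⟨⟨0, by omega⟩⟩
  classical
  induction n, hn using Nat.le_induction with
  | base =>
      have hpt : ∀ x : Fin 2 → Fin q, segLenSum (List.ofFn x) = 2 := by
        intro x
        rw [segLenSum_eq]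
        simp only [List.length_ofFn]
        rw [Finset.sum_range_succ, Finset.sum_range_succ, Finset.sum_range_zero]
        rw [if_neg (fun h => absurd h.1 (by omega)),
          if_neg (fun h => by
            have := h.2.1
            simp only [List.length_ofFn] at this
            omega)]
        omega
      rw [Finset.sum_congr rfl (fun x _ => hpt x), Finset.sum_const]
      simp [Fintype.card_fun]
      ring
  | succ n hn ih =>
      obtain ⟨m, rfl⟩ : ∃ m, n = m + 2 := ⟨n - 2, by omega⟩
      rw [← Equiv.sum_comp (Fin.consEquiv (fun _ : Fin (m+3) => Fin q))]
      rw [Fintype.sum_prod_type]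
      have hterm : ∀ (b : Fin q) (z : Fin (m+2) → Fin q),
          segLenSum (List.ofFn ((Fin.consEquiv (fun _ : Fin (m+3) => Fin q)) (b, z)))
            = 1 + (if b ≠ z ⟨0, by omega⟩ ∧ z ⟨0, by omega⟩ ≠ z ⟨1, by omega⟩
                ∧ b ≠ z ⟨1, by omega⟩ then 1 else 0) + segLenSum (List.ofFn z) := by
        intro b z
        have hrw : (Fin.consEquiv (fun _ : Fin (m+3) => Fin q)) (b, z) = Fin.cons b z := rfl
        rw [hrw, ofFn_cons, segLenSum_cons b _ (by simp)]
        rw [getElem!_ofFn z 0 (by omega), getElem!_ofFn z 1 (by omega)]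
        congr!
      rw [Finset.sum_congr rfl (fun b _ => Finset.sum_congr rfl (fun z _ => hterm b z))]
      have hsplit : ∀ b : Fin q,
          (∑ z : Fin (m+2) → Fin q,
            (1 + (if b ≠ z ⟨0, by omega⟩ ∧ z ⟨0, by omega⟩ ≠ z ⟨1, by omega⟩
                ∧ b ≠ z ⟨1, by omega⟩ then 1 else 0) + segLenSum (List.ofFn z)))
          = q^(m+2) + (∑ z : Fin (m+2) → Fin q,
              (if b ≠ z ⟨0, by omega⟩ ∧ z ⟨0, by omega⟩ ≠ z ⟨1, by omega⟩
                ∧ b ≠ z ⟨1, by omega⟩ then 1 else 0))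
            + (∑ z : Fin (m+2) → Fin q, segLenSum (List.ofFn z)) := by
        intro b
        rw [Finset.sum_add_distrib, Finset.sum_add_distrib, Finset.sum_const]
        simp [Fintype.card_fun]
      rw [Finset.sum_congr rfl (fun b _ => hsplit b)]
      rw [Finset.sum_add_distrib, Finset.sum_add_distrib, Finset.sum_const, Finset.sum_const]
      have hmid : (∑ b : Fin q, ∑ z : Fin (m+2) → Fin q,
          (if b ≠ z ⟨0, by omega⟩ ∧ z ⟨0, by omega⟩ ≠ z ⟨1, by omega⟩
            ∧ b ≠ z ⟨1, by omega⟩ then (1:ℕ) else 0))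
          = (q-2) * ((q-1) * q^(m+1)) := by
        rw [Finset.sum_comm]
        have h1 : ∀ z : Fin (m+2) → Fin q,
            (∑ b : Fin q, (if b ≠ z ⟨0, by omega⟩ ∧ z ⟨0, by omega⟩ ≠ z ⟨1, by omega⟩
              ∧ b ≠ z ⟨1, by omega⟩ then (1:ℕ) else 0))
            = (q - 2) * (if z ⟨0, by omega⟩ ≠ z ⟨1, by omega⟩ then 1 else 0) := by
          intro z
          rw [count_trip (z ⟨0, by omega⟩) (z ⟨1, by omega⟩)]
          split_ifs <;> simp
        rw [Finset.sum_congr rfl (fun z _ => h1 z), ← Finset.mul_sum, count_headpair]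
      rw [hmid, ih]
      simp only [Fintype.card_fun, Fintype.card_fin, Finset.card_univ, smul_eq_mul, mul_one]
      have e1 : q^(m+1) = q^m * q := pow_succ q m
      have e2 : q^(m+2) = q^m * q * q := by rw [pow_succ, e1]
      have e3 : q^(m+3) = q^m * q * q * q := by rw [pow_succ, e2]
      have e4 : m + 2 + 1 = m + 3 := rfl
      have e5 : m + 2 - 2 = m := rfl
      have e6 : m + 2 + 1 - 2 = m + 1 := rfl
      rw [e4, e5, e6, e1, e2, e3]
      ring

end Counting

/-- For `q ≥ 2`, `n ≥ 2`, the expected total length of the maximal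
alternating segments of a uniform `x ∈ Z_q^n` is `n + (n-2)(q-1)(q-2)/q²`. -/
theorem expected_segLenSum (q n : ℕ) (hq : 2 ≤ q) (hn : 2 ≤ n) :
    (∑ x : Fin n → Fin q, (segLenSum (List.ofFn x) : ℚ)) / (q : ℚ) ^ n =
      (n : ℚ) + ((n : ℚ) - 2) * (((q : ℚ) - 1) * ((q : ℚ) - 2)) / (q : ℚ) ^ 2 := by
  have hT := T_formula (q := q) hq n hn
  have hcast : (∑ x : Fin n → Fin q, (segLenSum (List.ofFn x) : ℚ))
      = ((∑ x : Fin n → Fin q, segLenSum (List.ofFn x) : ℕ) : ℚ) := by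
    rw [Nat.cast_sum]
  rw [hcast, hT]
  have hq0 : (q : ℚ) ≠ 0 := by
    have : (0:ℚ) < q := by exact_mod_cast (by omega : 0 < q)
    exact ne_of_gt this
  have hX0 : (q : ℚ) ^ (n-2) ≠ 0 := pow_ne_zero _ hq0
  have hpow : (q : ℚ) ^ n = (q : ℚ) ^ (n-2) * (q : ℚ) ^ 2 := by
    rw [← pow_add]
    congr 1
    omega
  push_cast [Nat.cast_sub (by omega : 2 ≤ n), Nat.cast_sub (by omega : 1 ≤ q),
    Nat.cast_sub (by omega : 2 ≤ q)]
  rw [hpow]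
  field_simp
end

section
/- Let q ≥ 2 and n ≥ 2 be integers. For x drawn uniformly at random from Z_q^n, the expected number of maximal alternating segments satisfies E_x[ A(x) ] = 1 + (n−2)(q−1)(q−2)/q² + (n−1)/q; in particular, for q = 2, E_x[ A(x) ] = (n+1)/2. -/
open scoped Classical

namespace AltAux

variable {α : Type*}

/-- Alternation condition on indices `[i,j]` of an ambient function `f`. -/
def altRel (f : ℕ → α) (i j : ℕ) : Prop :=
  (∀ k, i ≤ k → k + 1 ≤ j → f k ≠ f (k + 1)) ∧ (∀ k, i ≤ k → k + 2 ≤ j → f k = f (k + 2))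

lemma blockSeg_length (l : List α) (i j : ℕ) (hij : i ≤ j) (hj : j < l.length) :
    (blockSeg l i j).length = j + 1 - i := by
  simp only [blockSeg, List.length_take, List.length_drop]; omega

lemma blockSeg_get (l : List α) (i j t : ℕ) (h : t < (blockSeg l i j).length) :
    (blockSeg l i j).get ⟨t, h⟩
      = l[i + t]'(by simp only [blockSeg, List.length_take, List.length_drop] at h; omega) := by
  simp only [blockSeg, List.get_eq_getElem]
  rw [List.getElem_take, List.getElem_drop]

lemma isAlt_iff (l : List α) (f : ℕ → α) (hf : ∀ k (h : k < l.length), l[k] = f k)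
    (i j : ℕ) (hij : i ≤ j) (hj : j < l.length) :
    IsAltList (blockSeg l i j) ↔ altRel f i j := by
  have hlen : (blockSeg l i j).length = j + 1 - i := blockSeg_length l i j hij hj
  have hget : ∀ t (h : t < (blockSeg l i j).length),
      (blockSeg l i j).get ⟨t, h⟩ = f (i + t) := by
    intro t h
    rw [blockSeg_get]
    exact hf _ _
  constructor
  · rintro ⟨h1, h2⟩
    refine ⟨fun k hk hk1 => ?_, fun k hk hk2 => ?_⟩
    · have h' : (k - i) + 1 < (blockSeg l i j).length := by omega
      have := h1 (k - i) h'
      rw [hget, hget] at this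
      have e1 : i + (k - i) = k := by omega
      have e2 : i + (k - i + 1) = k + 1 := by omega
      rw [e1, e2] at this
      exact this
    · have h' : (k - i) + 2 < (blockSeg l i j).length := by omega
      have := h2 (k - i) h'
      rw [hget, hget] at this
      have e1 : i + (k - i) = k := by omega
      have e2 : i + (k - i + 2) = k + 2 := by omega
      rw [e1, e2] at this
      exact this
  · rintro ⟨h1, h2⟩
    refine ⟨fun t ht => ?_, fun t ht => ?_⟩
    · rw [hget, hget]
      have e : i + (t + 1) = (i + t) + 1 := by omega
      rw [e]
      exact h1 (i + t) (by omega) (by omega)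
    · rw [hget, hget]
      have e : i + (t + 2) = (i + t) + 2 := by omega
      rw [e]
      exact h2 (i + t) (by omega) (by omega)

lemma altRel_self (f : ℕ → α) (i : ℕ) : altRel f i i :=
  ⟨fun k hk h1 => absurd h1 (by omega), fun k hk h2 => absurd h2 (by omega)⟩

lemma altRel_mono (f : ℕ → α) {i j j' : ℕ} (h : altRel f i j) (hj' : j' ≤ j) : altRel f i j' :=
  ⟨fun k hk h1 => h.1 k hk (by omega), fun k hk h2 => h.2 k hk (by omega)⟩

lemma not_altRel_succ {f : ℕ → α} {i : ℕ} (h : ¬ altRel f i (i + 1)) : f i = f (i + 1) := by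
  by_contra hne
  exact h ⟨fun k hk h1 => by rw [show k = i by omega]; exact hne,
    fun k hk h2 => absurd h2 (by omega)⟩

lemma isMaxAltSeg_iff (l : List α) (f : ℕ → α) (hf : ∀ k (h : k < l.length), l[k] = f k)
    (i j : ℕ) :
    IsMaxAltSeg l i j ↔ i ≤ j ∧ j < l.length ∧ altRel f i j ∧
      (i = 0 ∨ ¬ altRel f (i - 1) j) ∧ (j + 1 = l.length ∨ ¬ altRel f i (j + 1)) := by
  unfold IsMaxAltSeg
  constructor
  · rintro ⟨hij, hj, halt, hleft, hright⟩
    refine ⟨hij, hj, (isAlt_iff l f hf i j hij hj).mp halt, ?_, ?_⟩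
    · rcases hleft with h | h
      · exact Or.inl h
      · rcases Nat.eq_zero_or_pos i with h0 | h0
        · exact Or.inl h0
        · exact Or.inr fun hc => h ((isAlt_iff l f hf (i - 1) j (by omega) hj).mpr hc)
    · rcases hright with h | h
      · exact Or.inl (by omega)
      · by_cases hj1 : j + 1 < l.length
        · exact Or.inr fun hc => h ((isAlt_iff l f hf i (j + 1) (by omega) hj1).mpr hc)
        · exact Or.inl (by omega)
  · rintro ⟨hij, hj, halt, hleft, hright⟩
    refine ⟨hij, hj, (isAlt_iff l f hf i j hij hj).mpr halt, ?_, ?_⟩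
    · rcases hleft with h | h
      · exact Or.inl h
      · exact Or.inr fun hc => h ((isAlt_iff l f hf (i - 1) j (by omega) hj).mp hc)
    · rcases hright with h | h
      · exact Or.inl (by omega)
      · by_cases hj1 : j + 1 < l.length
        · exact Or.inr fun hc => h ((isAlt_iff l f hf i (j + 1) (by omega) hj1).mp hc)
        · exact Or.inl (by omega)

end AltAux
namespace AltAux

variable {α : Type*}

/-- `i` starts a maximal alternating segment (for `i ≥ 1`; `i = 0` always starts). -/
def startCond (f : ℕ → α) (n i : ℕ) : Prop :=
  i = 0 ∨ f (i - 1) = f i ∨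
    (i + 1 < n ∧ f (i - 1) ≠ f i ∧ f i ≠ f (i + 1) ∧ f (i - 1) ≠ f (i + 1))

lemma startCond_of (f : ℕ → α) (n i j : ℕ) (hij : i ≤ j) (hj : j < n)
    (halt : altRel f i j) (hleft : i = 0 ∨ ¬ altRel f (i - 1) j) : startCond f n i := by
  rcases hleft with h0 | hna
  · exact Or.inl h0
  rcases Nat.eq_zero_or_pos i with h0 | hi
  · exact Or.inl h0
  by_cases heq : f (i - 1) = f i
  · exact Or.inr (Or.inl heq)
  have hii : i - 1 + 1 = i := by omega
  by_cases hj1 : i + 1 ≤ j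
  · have hne1 : f i ≠ f (i + 1) := halt.1 i le_rfl hj1
    by_cases heq2 : f (i - 1) = f (i + 1)
    · exfalso
      apply hna
      constructor
      · intro k hk h1
        rcases Nat.lt_or_ge k i with hk' | hk'
        · rw [show k = i - 1 by omega, hii]
          exact heq
        · exact halt.1 k hk' h1
      · intro k hk h2
        rcases Nat.lt_or_ge k i with hk' | hk'
        · rw [show k = i - 1 by omega, show i - 1 + 2 = i + 1 by omega]
          exact heq2
        · exact halt.2 k hk' h2
    · exact Or.inr (Or.inr ⟨by omega, heq, hne1, heq2⟩)
  · exfalso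
    apply hna
    constructor
    · intro k hk h1
      rw [show k = i - 1 by omega, hii]
      exact heq
    · intro k hk h2
      exact absurd h2 (by omega)

lemma exists_maxEnd (f : ℕ → α) (n i : ℕ) (hi : i < n) :
    ∃ j, i ≤ j ∧ j < n ∧ altRel f i j ∧ (j + 1 = n ∨ ¬ altRel f i (j + 1)) := by
  classical
  set P : ℕ → Prop := fun j => i ≤ j ∧ altRel f i j with hP
  have hPi : P i := ⟨le_rfl, altRel_self f i⟩
  have hin : i ≤ n - 1 := by omega
  refine ⟨Nat.findGreatest P (n - 1), ?_, ?_, ?_, ?_⟩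
  · exact Nat.le_findGreatest hin hPi
  · have := Nat.findGreatest_le (P := P) (n - 1)
    omega
  · exact (Nat.findGreatest_spec hin hPi).2
  · by_cases h : Nat.findGreatest P (n - 1) + 1 = n
    · exact Or.inl h
    · refine Or.inr fun hc => ?_
      have hle : Nat.findGreatest P (n - 1) + 1 ≤ n - 1 := by
        have := Nat.findGreatest_le (P := P) (n - 1)
        omega
      have := Nat.findGreatest_is_greatest (P := P) (Nat.lt_succ_self _) hle
      exact this ⟨by have := Nat.le_findGreatest hin hPi; omega, hc⟩

lemma exists_maxSeg_of_start (f : ℕ → α) (n i : ℕ) (hi : i < n) (hs : startCond f n i) :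
    ∃ j, i ≤ j ∧ j < n ∧ altRel f i j ∧
      (i = 0 ∨ ¬ altRel f (i - 1) j) ∧ (j + 1 = n ∨ ¬ altRel f i (j + 1)) := by
  obtain ⟨j, hij, hjn, halt, hright⟩ := exists_maxEnd f n i hi
  refine ⟨j, hij, hjn, halt, ?_, hright⟩
  rcases Nat.eq_zero_or_pos i with h0 | hipos
  · exact Or.inl h0
  have hii : i - 1 + 1 = i := by omega
  rcases hs with h0 | heq | ⟨h1, hne1, hne2, hne3⟩
  · exact Or.inl h0
  · refine Or.inr fun hc => ?_
    have := hc.1 (i - 1) le_rfl (by omega)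
    rw [hii] at this
    exact this heq
  · have hj1 : i + 1 ≤ j := by
      by_contra hlt
      have hji : j = i := by omega
      rcases hright with h | h
      · omega
      · rw [hji] at h
        exact hne2 (not_altRel_succ h)
    refine Or.inr fun hc => ?_
    have := hc.2 (i - 1) le_rfl (by omega)
    rw [show i - 1 + 2 = i + 1 by omega] at this
    exact hne3 this

lemma maxSeg_unique (f : ℕ → α) {n i j j' : ℕ}
    (h : i ≤ j ∧ j < n ∧ altRel f i j ∧
      (i = 0 ∨ ¬ altRel f (i - 1) j) ∧ (j + 1 = n ∨ ¬ altRel f i (j + 1)))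
    (h' : i ≤ j' ∧ j' < n ∧ altRel f i j' ∧
      (i = 0 ∨ ¬ altRel f (i - 1) j') ∧ (j' + 1 = n ∨ ¬ altRel f i (j' + 1))) :
    j = j' := by
  rcases lt_trichotomy j j' with hlt | heq | hgt
  · exfalso
    rcases h.2.2.2.2 with he | hna
    · omega
    · exact hna (altRel_mono f h'.2.2.1 (by omega))
  · exact heq
  · exfalso
    rcases h'.2.2.2.2 with he | hna
    · omega
    · exact hna (altRel_mono f h.2.2.1 (by omega))

lemma numAltSegs_eq_card_starts (l : List α) (f : ℕ → α)
    (hf : ∀ k (h : k < l.length), l[k] = f k) :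
    numAltSegs l = ((Finset.range l.length).filter fun i => startCond f l.length i).card := by
  classical
  unfold numAltSegs maxAltSegs
  apply Finset.card_bij (fun p _ => p.1)
  · rintro ⟨i, j⟩ hp
    simp only [Finset.mem_filter, Finset.mem_product, Finset.mem_range] at hp ⊢
    obtain ⟨hij, hjn, halt, hleft, -⟩ := (isMaxAltSeg_iff l f hf i j).mp hp.2
    exact ⟨by omega, startCond_of f _ i j hij hjn halt hleft⟩
  · rintro ⟨i, j⟩ hp ⟨i', j'⟩ hp' h
    simp only [Finset.mem_filter] at hp hp'
    simp only at h
    subst h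
    have c := (isMaxAltSeg_iff l f hf i j).mp hp.2
    have c' := (isMaxAltSeg_iff l f hf i j').mp hp'.2
    have : j = j' := maxSeg_unique f c c'
    simp [this]
  · intro i hi
    simp only [Finset.mem_filter, Finset.mem_range] at hi
    obtain ⟨j, h1, h2, h3, h4, h5⟩ := exists_maxSeg_of_start f l.length i hi.1 hi.2
    refine ⟨(i, j), ?_, rfl⟩
    simp only [Finset.mem_filter, Finset.mem_product, Finset.mem_range]
    exact ⟨⟨by omega, by omega⟩, (isMaxAltSeg_iff l f hf i j).mpr ⟨h1, h2, h3, h4, h5⟩⟩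

lemma card_starts (f : ℕ → α) (n : ℕ) (hn : 1 ≤ n) :
    ((Finset.range n).filter fun i => startCond f n i).card
      = 1 + ((Finset.Ico 1 n).filter fun i => startCond f n i).card := by
  classical
  have h : Finset.range n = insert 0 (Finset.Ico 1 n) := by
    ext k
    simp only [Finset.mem_range, Finset.mem_insert, Finset.mem_Ico]
    omega
  rw [h, Finset.filter_insert, if_pos (show startCond f n 0 from Or.inl rfl),
    Finset.card_insert_of_notMem (by simp)]
  omega

end AltAux
namespace AltAux

def patch3 {q n : ℕ} (a b c : Fin n)
    (p : (Fin q × Fin q × Fin q) × ({j : Fin n // j ≠ a ∧ j ≠ b ∧ j ≠ c} → Fin q))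
    (j : Fin n) : Fin q :=
  if h1 : j = a then p.1.1 else if h2 : j = b then p.1.2.1
  else if h3 : j = c then p.1.2.2 else p.2 ⟨j, h1, h2, h3⟩

lemma patch3_bijective {q n : ℕ} (a b c : Fin n) (hab : a ≠ b) (hac : a ≠ c) (hbc : b ≠ c) :
    Function.Bijective (patch3 (q := q) a b c) := by
  apply Function.bijective_iff_has_inverse.mpr
  refine ⟨fun x => ((x a, x b, x c), fun j => x j.1), ?_, ?_⟩
  · rintro ⟨⟨u, v, w⟩, g⟩
    refine Prod.ext ?_ ?_
    · simp [patch3, Ne.symm hab, Ne.symm hac, Ne.symm hbc]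
    · funext j
      obtain ⟨j, hj1, hj2, hj3⟩ := j
      simp [patch3, hj1, hj2, hj3]
  · intro x
    funext j
    by_cases h1 : j = a
    · subst h1; simp [patch3]
    by_cases h2 : j = b
    · subst h2; simp [patch3, h1]
    by_cases h3 : j = c
    · subst h3; simp [patch3, h1, h2]
    simp [patch3, h1, h2, h3]

lemma sum_indicator_three {q n : ℕ} (a b c : Fin n) (hab : a ≠ b) (hac : a ≠ c) (hbc : b ≠ c)
    (g : Fin q → Fin q → Fin q → ℚ) :
    ∑ x : Fin n → Fin q, g (x a) (x b) (x c)
      = (∑ t : Fin q × Fin q × Fin q, g t.1 t.2.1 t.2.2) * (q : ℚ) ^ (n - 3) := by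
  classical
  rw [← Fintype.sum_bijective (patch3 a b c) (patch3_bijective a b c hab hac hbc)
      (fun p => g p.1.1 p.1.2.1 p.1.2.2)
      (fun x => g (x a) (x b) (x c))
      (fun p => by simp [patch3, Ne.symm hab, Ne.symm hac, Ne.symm hbc])]
  rw [Fintype.sum_prod_type]
  show (∑ t : Fin q × Fin q × Fin q, ∑ _g : {j : Fin n // j ≠ a ∧ j ≠ b ∧ j ≠ c} → Fin q,
      g t.1 t.2.1 t.2.2) = _
  have hcard : Fintype.card {j : Fin n // j ≠ a ∧ j ≠ b ∧ j ≠ c} = n - 3 := by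
    rw [Fintype.card_subtype]
    have h2 : Finset.filter (fun j : Fin n => j ≠ a ∧ j ≠ b ∧ j ≠ c) Finset.univ
        = Finset.univ \ {a, b, c} := by
      ext j; simp [not_or]
    rw [h2, Finset.card_sdiff_of_subset (Finset.subset_univ _), Finset.card_univ, Fintype.card_fin]
    congr 1
    rw [Finset.card_insert_of_notMem (by simp [hab, hac]), Finset.card_pair hbc]
  have hc : Fintype.card ({j : Fin n // j ≠ a ∧ j ≠ b ∧ j ≠ c} → Fin q) = q ^ (n - 3) := by
    rw [Fintype.card_fun, Fintype.card_fin, hcard]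
  simp_rw [Finset.sum_const, Finset.card_univ, hc, nsmul_eq_mul]
  rw [← Finset.mul_sum]
  push_cast
  ring

def patch2 {q n : ℕ} (a b : Fin n)
    (p : (Fin q × Fin q) × ({j : Fin n // j ≠ a ∧ j ≠ b} → Fin q))
    (j : Fin n) : Fin q :=
  if h1 : j = a then p.1.1 else if h2 : j = b then p.1.2 else p.2 ⟨j, h1, h2⟩

lemma patch2_bijective {q n : ℕ} (a b : Fin n) (hab : a ≠ b) :
    Function.Bijective (patch2 (q := q) a b) := by
  apply Function.bijective_iff_has_inverse.mpr
  refine ⟨fun x => ((x a, x b), fun j => x j.1), ?_, ?_⟩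
  · rintro ⟨⟨u, v⟩, g⟩
    refine Prod.ext ?_ ?_
    · simp [patch2, Ne.symm hab]
    · funext j
      obtain ⟨j, hj1, hj2⟩ := j
      simp [patch2, hj1, hj2]
  · intro x
    funext j
    by_cases h1 : j = a
    · subst h1; simp [patch2]
    by_cases h2 : j = b
    · subst h2; simp [patch2, h1]
    simp [patch2, h1, h2]

lemma sum_indicator_two {q n : ℕ} (a b : Fin n) (hab : a ≠ b)
    (g : Fin q → Fin q → ℚ) :
    ∑ x : Fin n → Fin q, g (x a) (x b)
      = (∑ t : Fin q × Fin q, g t.1 t.2) * (q : ℚ) ^ (n - 2) := by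
  classical
  rw [← Fintype.sum_bijective (patch2 a b) (patch2_bijective a b hab)
      (fun p => g p.1.1 p.1.2)
      (fun x => g (x a) (x b))
      (fun p => by simp [patch2, Ne.symm hab])]
  rw [Fintype.sum_prod_type]
  show (∑ t : Fin q × Fin q, ∑ _g : {j : Fin n // j ≠ a ∧ j ≠ b} → Fin q,
      g t.1 t.2) = _
  have hcard : Fintype.card {j : Fin n // j ≠ a ∧ j ≠ b} = n - 2 := by
    rw [Fintype.card_subtype]
    have h2 : Finset.filter (fun j : Fin n => j ≠ a ∧ j ≠ b) Finset.univ
        = Finset.univ \ {a, b} := by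
      ext j; simp [not_or]
    rw [h2, Finset.card_sdiff_of_subset (Finset.subset_univ _), Finset.card_univ, Fintype.card_fin]
    congr 1
    exact Finset.card_pair hab
  have hc : Fintype.card ({j : Fin n // j ≠ a ∧ j ≠ b} → Fin q) = q ^ (n - 2) := by
    rw [Fintype.card_fun, Fintype.card_fin, hcard]
  simp_rw [Finset.sum_const, Finset.card_univ, hc, nsmul_eq_mul]
  rw [← Finset.mul_sum]
  push_cast
  ring

lemma sum_pair_eq (q : ℕ) :
    (∑ t : Fin q × Fin q, if t.1 = t.2 then (1:ℚ) else 0) = q := by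
  rw [Fintype.sum_prod_type]
  simp [Finset.sum_ite_eq]

lemma sum_triple_P (q : ℕ) (hq : 2 ≤ q) :
    (∑ t : Fin q × Fin q × Fin q,
        if (t.1 = t.2.1 ∨ (t.1 ≠ t.2.1 ∧ t.2.1 ≠ t.2.2 ∧ t.1 ≠ t.2.2)) then (1:ℚ) else 0)
      = (q:ℚ) * ((q:ℚ) + ((q:ℚ) - 1) * ((q:ℚ) - 2)) := by
  classical
  rw [Fintype.sum_prod_type]
  have hinner : ∀ u : Fin q, (∑ t : Fin q × Fin q,
      if (u = t.1 ∨ (u ≠ t.1 ∧ t.1 ≠ t.2 ∧ u ≠ t.2)) then (1:ℚ) else 0)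
      = (q:ℚ) + ((q:ℚ) - 1) * ((q:ℚ) - 2) := by
    intro u
    rw [Fintype.sum_prod_type]
    have hvw : ∀ v : Fin q, (∑ w : Fin q,
        if (u = v ∨ (u ≠ v ∧ v ≠ w ∧ u ≠ w)) then (1:ℚ) else 0)
        = if u = v then (q:ℚ) else ((q:ℚ) - 2) := by
      intro v
      by_cases huv : u = v
      · simp [huv]
      · rw [if_neg huv]
        have hcong : ∀ w : Fin q, (if (u = v ∨ (u ≠ v ∧ v ≠ w ∧ u ≠ w)) then (1:ℚ) else 0)
            = if (w ≠ v ∧ w ≠ u) then (1:ℚ) else 0 := by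
          intro w
          refine if_congr ?_ rfl rfl
          constructor
          · rintro (h | ⟨-, h2, h3⟩)
            · exact absurd h huv
            · exact ⟨Ne.symm h2, Ne.symm h3⟩
          · rintro ⟨h2, h3⟩
            exact Or.inr ⟨huv, Ne.symm h2, Ne.symm h3⟩
        rw [Finset.sum_congr rfl (fun w _ => hcong w), Finset.sum_boole]
        have h2 : Finset.filter (fun w : Fin q => w ≠ v ∧ w ≠ u) Finset.univ
            = Finset.univ \ {v, u} := by
          ext w; simp [not_or]
        rw [h2, Finset.card_sdiff_of_subset (Finset.subset_univ _), Finset.card_univ, Fintype.card_fin,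
          Finset.card_insert_of_notMem (by simp [Ne.symm huv]), Finset.card_singleton]
        rw [Nat.cast_sub (by omega)]
        norm_num
    rw [Finset.sum_congr rfl (fun v _ => hvw v)]
    have hsplit : ∀ v : Fin q, (if u = v then (q:ℚ) else ((q:ℚ) - 2))
        = ((q:ℚ) - 2) + (if u = v then ((q:ℚ) - ((q:ℚ) - 2)) else 0) := by
      intro v
      by_cases h : u = v
      · rw [if_pos h, if_pos h]; ring
      · rw [if_neg h, if_neg h]; ring
    rw [Finset.sum_congr rfl (fun v _ => hsplit v), Finset.sum_add_distrib, Finset.sum_const,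
      Finset.card_univ, Fintype.card_fin]
    simp only [Finset.sum_ite_eq, Finset.mem_univ, if_true]
    ring
  rw [Finset.sum_congr rfl (fun u _ => hinner u), Finset.sum_const, Finset.card_univ,
    Fintype.card_fin]
  ring
end AltAux
namespace AltAux

/-- Extension of `x : Fin n → Fin q` to all of `ℕ`. -/
def extF {q n : ℕ} (hn : 0 < n) (x : Fin n → Fin q) (k : ℕ) : Fin q :=
  if h : k < n then x ⟨k, h⟩ else x ⟨0, hn⟩

lemma extF_eq {q n : ℕ} (hn : 0 < n) (x : Fin n → Fin q) (k : ℕ) (h : k < n) :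
    extF hn x k = x ⟨k, h⟩ := dif_pos h

lemma extF_get {q n : ℕ} (hn : 0 < n) (x : Fin n → Fin q) :
    ∀ k (h : k < (List.ofFn x).length), (List.ofFn x)[k] = extF hn x k := by
  intro k h
  have hk : k < n := by simpa using h
  rw [List.getElem_ofFn, extF_eq hn x k hk]

lemma startCond_iff_mid {q n : ℕ} (hn : 0 < n) (x : Fin n → Fin q) (i : ℕ)
    (h1 : 1 ≤ i) (h2 : i + 1 < n) :
    startCond (extF hn x) n i ↔
      (x ⟨i - 1, by omega⟩ = x ⟨i, by omega⟩ ∨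
        (x ⟨i - 1, by omega⟩ ≠ x ⟨i, by omega⟩ ∧ x ⟨i, by omega⟩ ≠ x ⟨i + 1, h2⟩
          ∧ x ⟨i - 1, by omega⟩ ≠ x ⟨i + 1, h2⟩)) := by
  unfold startCond
  rw [extF_eq hn x (i - 1) (by omega), extF_eq hn x i (by omega), extF_eq hn x (i + 1) h2]
  constructor
  · rintro (h | h | ⟨-, h⟩)
    · omega
    · exact Or.inl h
    · exact Or.inr h
  · rintro (h | h)
    · exact Or.inr (Or.inl h)
    · exact Or.inr (Or.inr ⟨h2, h⟩)

lemma startCond_iff_last {q n : ℕ} (hn : 0 < n) (x : Fin n → Fin q) (i : ℕ)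
    (h1 : 1 ≤ i) (h2 : i + 1 = n) :
    startCond (extF hn x) n i ↔ x ⟨i - 1, by omega⟩ = x ⟨i, by omega⟩ := by
  unfold startCond
  rw [extF_eq hn x (i - 1) (by omega), extF_eq hn x i (by omega)]
  constructor
  · rintro (h | h | ⟨h, -⟩)
    · omega
    · exact h
    · omega
  · intro h
    exact Or.inr (Or.inl h)

end AltAux

/-- The expected number of maximal alternating segments of a uniform
`x ∈ Z_q^n` is `1 + (n-2)(q-1)(q-2)/q² + (n-1)/q`; in particular for `q = 2` it is
`(n+1)/2`. -/
theorem expected_numAltSegs (q n : ℕ) (hq : 2 ≤ q) (hn : 2 ≤ n) :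
    (∑ x : Fin n → Fin q, (numAltSegs (List.ofFn x) : ℚ)) / (q : ℚ) ^ n =
        1 + ((n : ℚ) - 2) * ((q : ℚ) - 1) * ((q : ℚ) - 2) / (q : ℚ) ^ 2
          + ((n : ℚ) - 1) / q ∧
      (q = 2 →
        (∑ x : Fin n → Fin q, (numAltSegs (List.ofFn x) : ℚ)) / (q : ℚ) ^ n =
          ((n : ℚ) + 1) / 2) := by
  classical
  obtain ⟨m, rfl⟩ : ∃ m, n = m + 2 := ⟨n - 2, by omega⟩
  have hq0 : (q : ℚ) ≠ 0 := Nat.cast_ne_zero.mpr (by omega)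
  have hnpos : 0 < m + 2 := by omega
  have key : ∀ x : Fin (m + 2) → Fin q, (numAltSegs (List.ofFn x) : ℚ)
      = 1 + ∑ i ∈ Finset.Ico 1 (m + 2),
          (if AltAux.startCond (AltAux.extF hnpos x) (m + 2) i then (1 : ℚ) else 0) := by
    intro x
    have hlen : (List.ofFn x).length = m + 2 := List.length_ofFn
    rw [AltAux.numAltSegs_eq_card_starts (List.ofFn x) (AltAux.extF hnpos x)
      (AltAux.extF_get hnpos x), hlen, AltAux.card_starts (AltAux.extF hnpos x) (m + 2) (by omega)]
    push_cast
    rw [← Finset.sum_boole]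
  have main : (∑ x : Fin (m + 2) → Fin q, (numAltSegs (List.ofFn x) : ℚ))
      = (q : ℚ) ^ (m + 2) + (m : ℚ) * ((q : ℚ) * ((q : ℚ) + ((q : ℚ) - 1) * ((q : ℚ) - 2))
          * (q : ℚ) ^ (m + 2 - 3)) + (q : ℚ) ^ (m + 1) := by
    rw [Finset.sum_congr rfl (fun x _ => key x), Finset.sum_add_distrib, Finset.sum_const,
      Finset.card_univ]
    have hcard : Fintype.card (Fin (m + 2) → Fin q) = q ^ (m + 2) := by
      rw [Fintype.card_fun, Fintype.card_fin, Fintype.card_fin]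
    rw [hcard, Finset.sum_comm]
    have hIco : Finset.Ico 1 (m + 2) = Finset.Ico 1 (m + 1 + 1) := rfl
    rw [hIco, Finset.sum_Ico_succ_top (by omega)]
    -- last term
    have hlast : (∑ x : Fin (m + 2) → Fin q,
        if AltAux.startCond (AltAux.extF hnpos x) (m + 2) (m + 1) then (1 : ℚ) else 0)
        = (q : ℚ) ^ (m + 1) := by
      have step : (∑ x : Fin (m + 2) → Fin q,
          if AltAux.startCond (AltAux.extF hnpos x) (m + 2) (m + 1) then (1 : ℚ) else 0)
          = ∑ x : Fin (m + 2) → Fin q,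
            if x ⟨m, by omega⟩ = x ⟨m + 1, by omega⟩ then (1 : ℚ) else 0 :=
        Finset.sum_congr rfl (fun x _ => if_congr
          (AltAux.startCond_iff_last hnpos x (m + 1) (by omega) rfl) rfl rfl)
      rw [step, AltAux.sum_indicator_two (⟨m, by omega⟩ : Fin (m + 2)) ⟨m + 1, by omega⟩
        (by simp only [ne_eq, Fin.mk.injEq]; omega)
        (fun u v : Fin q => if u = v then (1 : ℚ) else 0)]
      rw [AltAux.sum_pair_eq q, show m + 2 - 2 = m by omega]
      ring
    rw [hlast]
    -- middle terms
    have hmid : ∀ i ∈ Finset.Ico 1 (m + 1), (∑ x : Fin (m + 2) → Fin q,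
        if AltAux.startCond (AltAux.extF hnpos x) (m + 2) i then (1 : ℚ) else 0)
        = (q : ℚ) * ((q : ℚ) + ((q : ℚ) - 1) * ((q : ℚ) - 2)) * (q : ℚ) ^ (m + 2 - 3) := by
      intro i hi
      simp only [Finset.mem_Ico] at hi
      have h2 : i + 1 < m + 2 := by omega
      have step : (∑ x : Fin (m + 2) → Fin q,
          if AltAux.startCond (AltAux.extF hnpos x) (m + 2) i then (1 : ℚ) else 0)
          = ∑ x : Fin (m + 2) → Fin q,
            if (x ⟨i - 1, by omega⟩ = x ⟨i, by omega⟩ ∨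
                (x ⟨i - 1, by omega⟩ ≠ x ⟨i, by omega⟩ ∧ x ⟨i, by omega⟩ ≠ x ⟨i + 1, h2⟩
                  ∧ x ⟨i - 1, by omega⟩ ≠ x ⟨i + 1, h2⟩)) then (1 : ℚ) else 0 :=
        Finset.sum_congr rfl (fun x _ => if_congr
          (AltAux.startCond_iff_mid hnpos x i hi.1 h2) rfl rfl)
      rw [step, AltAux.sum_indicator_three (⟨i - 1, by omega⟩ : Fin (m + 2)) ⟨i, by omega⟩ ⟨i + 1, h2⟩
        (by simp only [ne_eq, Fin.mk.injEq]; omega) (by simp only [ne_eq, Fin.mk.injEq]; omega)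
        (by simp only [ne_eq, Fin.mk.injEq]; omega)
        (fun u v w : Fin q =>
          if (u = v ∨ (u ≠ v ∧ v ≠ w ∧ u ≠ w)) then (1 : ℚ) else 0)]
      rw [AltAux.sum_triple_P q hq]
    rw [Finset.sum_congr rfl hmid, Finset.sum_const, Nat.card_Ico, nsmul_eq_mul]
    push_cast
    ring
  have part1 : (∑ x : Fin (m + 2) → Fin q, (numAltSegs (List.ofFn x) : ℚ)) / (q : ℚ) ^ (m + 2)
      = 1 + (((m + 2 : ℕ) : ℚ) - 2) * ((q : ℚ) - 1) * ((q : ℚ) - 2) / (q : ℚ) ^ 2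
          + (((m + 2 : ℕ) : ℚ) - 1) / q := by
    rcases Nat.eq_zero_or_pos m with hm | hm
    · subst hm
      rw [main]
      norm_num
      field_simp
    · obtain ⟨k, rfl⟩ : ∃ k, m = k + 1 := ⟨m - 1, by omega⟩
      rw [main, show k + 1 + 2 - 3 = k by omega]
      push_cast
      field_simp
      ring
  refine ⟨part1, fun hq2 => ?_⟩
  subst hq2
  rw [part1]
  push_cast
  norm_num
  ring
end

section
/- Let q ≥ 2 and n ≥ 2 be integers, and let s be an integer with 2 ≤ s ≤ n−1. Then χ(s) = 2(q−1)²·q^{n−s} + (n−s−1)(q−1)³·q^{n−s−1}. -/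
open scoped Classical

namespace ChiProof

variable {q n : ℕ}

/-- Extension of `x : Fin n → Fin q` to `ℕ`. -/
def xe (hn : 0 < n) (x : Fin n → Fin q) : ℕ → Fin q := fun m => x ⟨m % n, Nat.mod_lt m hn⟩

lemma xe_eq (hn : 0 < n) (x : Fin n → Fin q) (m : ℕ) (h : m < n) : xe hn x m = x ⟨m, h⟩ := by
  simp [xe, Nat.mod_eq_of_lt h]

def AltOn (y : ℕ → Fin q) (i j : ℕ) : Prop :=
  (∀ m, i ≤ m → m + 1 ≤ j → y m ≠ y (m + 1)) ∧ (∀ m, i ≤ m → m + 2 ≤ j → y m = y (m + 2))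

lemma isAlt_iff (hn : 0 < n) (x : Fin n → Fin q) (i j : ℕ) (hij : i ≤ j) (hj : j < n) :
    IsAltList (blockSeg (List.ofFn x) i j) ↔ AltOn (xe hn x) i j := by
  have hlen : (blockSeg (List.ofFn x) i j).length = j + 1 - i := by
    simp [blockSeg]; omega
  have hget : ∀ m (h : m < (blockSeg (List.ofFn x) i j).length),
      (blockSeg (List.ofFn x) i j)[m] = xe hn x (i + m) := by
    intro m h
    have h' := h
    rw [hlen] at h'
    have h1 : i + m < n := by omega
    rw [xe_eq hn x _ h1]
    simp only [blockSeg, List.getElem_take, List.getElem_drop, List.getElem_ofFn]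
  constructor
  · rintro ⟨h1, h2⟩
    constructor
    · intro m hm hm1
      have hlt : (m - i) + 1 < (blockSeg (List.ofFn x) i j).length := by rw [hlen]; omega
      have := h1 (m - i) hlt
      rw [List.get_eq_getElem, List.get_eq_getElem, hget, hget] at this
      have e1 : i + (m - i) = m := by omega
      have e2 : i + (m - i + 1) = m + 1 := by omega
      rwa [e1, e2] at this
    · intro m hm hm2
      have hlt : (m - i) + 2 < (blockSeg (List.ofFn x) i j).length := by rw [hlen]; omega
      have := h2 (m - i) hlt
      rw [List.get_eq_getElem, List.get_eq_getElem, hget, hget] at this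
      have e1 : i + (m - i) = m := by omega
      have e2 : i + (m - i + 2) = m + 2 := by omega
      rwa [e1, e2] at this
  · rintro ⟨h1, h2⟩
    constructor
    · intro m h
      rw [List.get_eq_getElem, List.get_eq_getElem, hget, hget]
      have hl := h; rw [hlen] at hl
      have := h1 (i + m) (by omega) (by omega)
      rwa [show i + m + 1 = i + (m + 1) from by omega] at this
    · intro m h
      rw [List.get_eq_getElem, List.get_eq_getElem, hget, hget]
      have hl := h; rw [hlen] at hl
      have := h2 (i + m) (by omega) (by omega)
      rwa [show i + m + 2 = i + (m + 2) from by omega] at this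

lemma altOn_pred {y : ℕ → Fin q} {i j : ℕ} (h : AltOn y i j) (hi : 1 ≤ i) (hij : i + 1 ≤ j) :
    AltOn y (i - 1) j ↔ y (i - 1) = y (i + 1) := by
  constructor
  · intro h'
    have := h'.2 (i - 1) le_rfl (by omega)
    rwa [show i - 1 + 2 = i + 1 from by omega] at this
  · intro he
    constructor
    · intro m hm hm1
      rcases Nat.lt_or_ge m i with hc | hc
      · have e1 : m = i - 1 := by omega
        have e2 : m + 1 = i := by omega
        have e3 : i - 1 + 1 = i := by omega
        rw [e1, e3, he]
        exact fun hcon => h.1 i le_rfl hij hcon.symm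
      · exact h.1 m hc hm1
    · intro m hm hm2
      rcases Nat.lt_or_ge m i with hc | hc
      · have e1 : m = i - 1 := by omega
        have e2 : m + 2 = i + 1 := by omega
        have e3 : i - 1 + 2 = i + 1 := by omega
        rw [e1, e3]; exact he
      · exact h.2 m hc hm2

lemma altOn_succ {y : ℕ → Fin q} {i j : ℕ} (h : AltOn y i j) (hij : i + 1 ≤ j) :
    AltOn y i (j + 1) ↔ y (j - 1) = y (j + 1) := by
  constructor
  · intro h'
    have := h'.2 (j - 1) (by omega) (by omega)
    rwa [show j - 1 + 2 = j + 1 from by omega] at this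
  · intro he
    constructor
    · intro m hm hm1
      rcases Nat.lt_or_ge (m + 1) (j + 1) with hc | hc
      · exact h.1 m hm (by omega)
      · have e1 : m = j := by omega
        subst e1
        intro hcon
        have h1 : y (m - 1) ≠ y m := by
          have := h.1 (m - 1) (by omega) (by omega)
          rwa [show m - 1 + 1 = m from by omega] at this
        exact h1 (he.trans hcon.symm)
    · intro m hm hm2
      rcases Nat.lt_or_ge (m + 2) (j + 1) with hc | hc
      · exact h.2 m hm (by omega)
      · have e1 : m = j - 1 := by omega
        rw [e1, show j - 1 + 2 = j + 1 from by omega]; exact he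

def altp (a b : Fin q) (m : ℕ) : Fin q := if m % 2 = 0 then a else b

lemma altp_add_two (a b : Fin q) (t : ℕ) : altp a b (t + 2) = altp a b t := by
  simp [altp, Nat.add_mod_right]

lemma altp_ne {a b : Fin q} (hab : a ≠ b) (t : ℕ) : altp a b t ≠ altp a b (t + 1) := by
  rcases Nat.mod_two_eq_zero_or_one t with h | h
  · have h2 : (t + 1) % 2 = 1 := by omega
    simpa [altp, h, h2] using hab
  · have h2 : (t + 1) % 2 = 0 := by omega
    simpa [altp, h, h2] using hab.symm

lemma altOn_eq_altp {y : ℕ → Fin q} {i j : ℕ} (h : AltOn y i j) :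
    ∀ m, i + m ≤ j → y (i + m) = altp (y i) (y (i + 1)) m := by
  intro m
  induction m using Nat.strong_induction_on with
  | _ m ih =>
    intro hm
    match m with
    | 0 => simp [altp]
    | 1 => simp [altp]
    | (k + 2) =>
      have e := h.2 (i + k) (by omega) (by omega)
      rw [show i + k + 2 = i + (k + 2) from by omega] at e
      rw [← e, ih k (by omega) (by omega), altp_add_two]

lemma isMaxAltSeg_iff (hn : 0 < n) (x : Fin n → Fin q) (i j s : ℕ) (hs : 2 ≤ s)
    (hj : j = i + s - 1) (hjn : j ≤ n - 1) :
    IsMaxAltSeg (List.ofFn x) i j ↔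
      (AltOn (xe hn x) i j ∧ (i = 0 ∨ xe hn x (i - 1) ≠ xe hn x (i + 1)) ∧
        (j = n - 1 ∨ xe hn x (j + 1) ≠ xe hn x (j - 1))) := by
  have hij : i + 1 ≤ j := by omega
  have hjlt : j < n := by omega
  rw [IsMaxAltSeg, List.length_ofFn]
  constructor
  · rintro ⟨-, -, hA, hL, hR⟩
    have hA' : AltOn (xe hn x) i j := (isAlt_iff hn x i j (by omega) hjlt).1 hA
    refine ⟨hA', ?_, ?_⟩
    · rcases hL with h0 | hL
      · exact Or.inl h0
      · rcases Nat.eq_zero_or_pos i with h0 | h0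
        · exact Or.inl h0
        · refine Or.inr fun hcon => hL ?_
          rw [isAlt_iff hn x (i - 1) j (by omega) hjlt, altOn_pred hA' h0 hij]
          exact hcon
    · rcases hR with h0 | hR
      · exact Or.inl h0
      · by_cases h0 : j = n - 1
        · exact Or.inl h0
        · refine Or.inr fun hcon => hR ?_
          rw [isAlt_iff hn x i (j + 1) (by omega) (by omega), altOn_succ hA' hij]
          exact hcon.symm
  · rintro ⟨hA', hL, hR⟩
    have hA : IsAltList (blockSeg (List.ofFn x) i j) := (isAlt_iff hn x i j (by omega) hjlt).2 hA'
    refine ⟨by omega, hjlt, hA, ?_, ?_⟩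
    · rcases hL with h0 | hL
      · exact Or.inl h0
      · rcases Nat.eq_zero_or_pos i with h0 | h0
        · exact Or.inl h0
        · refine Or.inr fun hcon => hL ?_
          have := (isAlt_iff hn x (i - 1) j (by omega) hjlt).1 hcon
          exact (altOn_pred hA' h0 hij).1 this
    · rcases hR with h0 | hR
      · exact Or.inl h0
      · by_cases h0 : j = n - 1
        · exact Or.inl h0
        · refine Or.inr fun hcon => hR ?_
          have := (isAlt_iff hn x i (j + 1) (by omega) (by omega)).1 hcon
          exact ((altOn_succ hA' hij).1 this).symm



lemma count_eq (v : Fin q) : (∑ d : Fin q, if d = v then 1 else 0) = 1 := by simp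

lemma count_ne (v : Fin q) : (∑ d : Fin q, if d ≠ v then 1 else 0) = q - 1 := by
  rw [← Finset.card_filter, Finset.filter_ne', Finset.card_erase_of_mem (Finset.mem_univ v)]
  simp

lemma count_ne' (v : Fin q) : (∑ d : Fin q, if v ≠ d then 1 else 0) = q - 1 := by
  rw [← count_ne v]
  exact Finset.sum_congr rfl fun d _ => by simp [ne_comm]

lemma quad_count (c1 c2 : ℕ) (C2 : Fin q → Fin q → Prop) (C3 : Fin q → Fin q → Fin q → Prop)
    (h2 : ∀ b, (∑ c : Fin q, if C2 b c then 1 else 0) = c1)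
    (h3 : ∀ a b : Fin q, a ≠ b → (∑ d : Fin q, if C3 a b d then 1 else 0) = c2) :
    (Finset.univ.filter fun y : Fin q × Fin q × Fin q × Fin q =>
        y.1 ≠ y.2.1 ∧ C2 y.2.1 y.2.2.1 ∧ C3 y.1 y.2.1 y.2.2.2).card
      = q * (q - 1) * c1 * c2 := by
  rw [Finset.card_filter]
  rw [show (∑ y : Fin q × Fin q × Fin q × Fin q,
        if y.1 ≠ y.2.1 ∧ C2 y.2.1 y.2.2.1 ∧ C3 y.1 y.2.1 y.2.2.2 then 1 else 0)
      = ∑ a : Fin q, ∑ b : Fin q, ∑ c : Fin q, ∑ d : Fin q,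
          if a ≠ b ∧ C2 b c ∧ C3 a b d then 1 else 0 from by
    rw [Fintype.sum_prod_type]
    exact Finset.sum_congr rfl fun a _ => by
      rw [Fintype.sum_prod_type]
      exact Finset.sum_congr rfl fun b _ => by rw [Fintype.sum_prod_type]]
  have step1 : ∀ a b : Fin q,
      (∑ c : Fin q, ∑ d : Fin q, if a ≠ b ∧ C2 b c ∧ C3 a b d then 1 else 0)
        = if a ≠ b then c1 * c2 else 0 := by
    intro a b
    by_cases hab : a ≠ b
    · rw [if_pos hab, ← h2 b, ← h3 a b hab, Finset.sum_mul_sum]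
      refine Finset.sum_congr rfl fun c _ => Finset.sum_congr rfl fun d _ => ?_
      by_cases hc : C2 b c <;> by_cases hd : C3 a b d <;> simp [hc, hd, hab]
    · rw [if_neg hab]
      refine Finset.sum_eq_zero fun c _ => Finset.sum_eq_zero fun d _ => by simp [hab]
  rw [Finset.sum_congr rfl fun a _ => Finset.sum_congr rfl fun b _ => step1 a b]
  have step2 : ∀ a : Fin q,
      (∑ b : Fin q, if a ≠ b then c1 * c2 else 0) = (q - 1) * (c1 * c2) := by
    intro a
    rw [show (∑ b : Fin q, if a ≠ b then c1 * c2 else 0)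
        = ∑ b : Fin q, (if a ≠ b then 1 else 0) * (c1 * c2) from
      Finset.sum_congr rfl fun b _ => by by_cases h : a ≠ b <;> simp [h]]
    rw [← Finset.sum_mul, count_ne' a]
  rw [Finset.sum_congr rfl fun a _ => step2 a, Finset.sum_const, Finset.card_univ,
    Fintype.card_fin, smul_eq_mul]
  ring

def decf {q n : ℕ} (i j : ℕ) (y : Fin q × Fin q × Fin q × Fin q)
    (f : {k : Fin n // ¬(i ≤ (k : ℕ) + 1 ∧ (k : ℕ) ≤ j + 1)} → Fin q) : Fin n → Fin q :=
  fun k => if hk : i ≤ (k : ℕ) + 1 ∧ (k : ℕ) ≤ j + 1 then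
      (if (k : ℕ) + 1 = i then y.2.2.1 else if (k : ℕ) = j + 1 then y.2.2.2
        else altp y.1 y.2.1 ((k : ℕ) - i))
    else f ⟨k, hk⟩

lemma xe_decf (hn : 0 < n) (i j : ℕ) (y : Fin q × Fin q × Fin q × Fin q)
    (f : {k : Fin n // ¬(i ≤ (k : ℕ) + 1 ∧ (k : ℕ) ≤ j + 1)} → Fin q) (m : ℕ) (hm : m < n) :
    xe hn (decf i j y f) m = if hk : i ≤ m + 1 ∧ m ≤ j + 1 then
      (if m + 1 = i then y.2.2.1 else if m = j + 1 then y.2.2.2 else altp y.1 y.2.1 (m - i))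
    else f ⟨⟨m, hm⟩, hk⟩ := by
  rw [xe_eq hn _ m hm]; rfl

lemma master_count (hq : 0 < q) (hn : 0 < n) (i s : ℕ) (hs : 2 ≤ s) (hjn : i + s - 1 ≤ n - 1) :
    (Finset.univ.filter fun x : Fin n → Fin q =>
        AltOn (xe hn x) i (i + s - 1) ∧
          (i = 0 ∨ xe hn x (i - 1) ≠ xe hn x (i + 1)) ∧
          (i + s - 1 = n - 1 ∨ xe hn x (i + s - 1 + 1) ≠ xe hn x (i + s - 1 - 1))).card
      = (q * (q - 1) * (if i = 0 then 1 else q - 1) * (if i + s - 1 = n - 1 then 1 else q - 1))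
          * q ^ (n - (s + (if i = 0 then 0 else 1) + (if i + s - 1 = n - 1 then 0 else 1))) := by
  set j := i + s - 1 with hjdef
  have hij : i + 1 ≤ j := by omega
  have hjlt : j < n := by omega
  set z0 : Fin q := ⟨0, hq⟩ with hz0
  -- value helpers for decoded functions
  have hval : ∀ (y : Fin q × Fin q × Fin q × Fin q) f (m : ℕ), i ≤ m → m ≤ j →
      xe hn (decf i j y f) m = altp y.1 y.2.1 (m - i) := by
    intro y f m h1 h2
    rw [xe_decf hn i j y f m (by omega), dif_pos ⟨by omega, by omega⟩,
      if_neg (by omega), if_neg (by omega)]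
  have hvalc : ∀ (y : Fin q × Fin q × Fin q × Fin q) f, 1 ≤ i →
      xe hn (decf i j y f) (i - 1) = y.2.2.1 := by
    intro y f h1
    rw [xe_decf hn i j y f (i - 1) (by omega), dif_pos ⟨by omega, by omega⟩, if_pos (by omega)]
  have hvald : ∀ (y : Fin q × Fin q × Fin q × Fin q) f, j ≠ n - 1 →
      xe hn (decf i j y f) (j + 1) = y.2.2.2 := by
    intro y f h1
    rw [xe_decf hn i j y f (j + 1) (by omega), dif_pos ⟨by omega, by omega⟩,
      if_neg (by omega), if_pos rfl]
  have hb : ∀ (y : Fin q × Fin q × Fin q × Fin q) f,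
      xe hn (decf i j y f) (i + 1) = y.2.1 := by
    intro y f
    rw [hval y f (i + 1) (by omega) (by omega), show i + 1 - i = 1 from by omega]
    simp [altp]
  have ha : ∀ (y : Fin q × Fin q × Fin q × Fin q) f,
      xe hn (decf i j y f) i = y.1 := by
    intro y f
    rw [hval y f i le_rfl (by omega), show i - i = 0 from by omega]
    simp [altp]
  -- the quad Finset
  set Q : Finset (Fin q × Fin q × Fin q × Fin q) := Finset.univ.filter fun y =>
      y.1 ≠ y.2.1 ∧ (if i = 0 then y.2.2.1 = z0 else y.2.2.1 ≠ y.2.1) ∧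
        (if j = n - 1 then y.2.2.2 = z0 else y.2.2.2 ≠ altp y.1 y.2.1 (s - 2)) with hQ
  have hcard : (Finset.univ.filter fun x : Fin n → Fin q =>
        AltOn (xe hn x) i j ∧
          (i = 0 ∨ xe hn x (i - 1) ≠ xe hn x (i + 1)) ∧
          (j = n - 1 ∨ xe hn x (j + 1) ≠ xe hn x (j - 1))).card
      = (Q ×ˢ (Finset.univ : Finset ({k : Fin n // ¬(i ≤ (k : ℕ) + 1 ∧ (k : ℕ) ≤ j + 1)} → Fin q))).card := by
    apply Finset.card_nbij'
      (i := fun x => ((xe hn x i, xe hn x (i + 1),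
          (if i = 0 then z0 else xe hn x (i - 1)), (if j = n - 1 then z0 else xe hn x (j + 1))),
        fun k => x k.1))
      (j := fun yf => decf i j yf.1 yf.2)
    · -- enc maps into product
      intro x hx
      rw [Finset.mem_coe, Finset.mem_filter] at hx
      obtain ⟨-, hA, hL, hR⟩ := hx
      rw [Finset.mem_coe, Finset.mem_product]
      refine ⟨?_, Finset.mem_univ _⟩
      rw [hQ, Finset.mem_filter]
      refine ⟨Finset.mem_univ _, hA.1 i le_rfl hij, ?_, ?_⟩
      · by_cases hi : i = 0
        · simp [hi]
        · simp only [if_neg hi]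
          rcases hL with h0 | hne
          · exact absurd h0 hi
          · exact hne
      · by_cases hj0 : j = n - 1
        · simp [hj0]
        · simp only [if_neg hj0]
          have hpat := altOn_eq_altp hA (s - 2) (by omega)
          rw [show i + (s - 2) = j - 1 from by omega] at hpat
          rw [← hpat]
          rcases hR with h0 | hne
          · exact absurd h0 hj0
          · exact hne
    · -- dec maps into filter
      rintro ⟨y, f⟩ hyf
      rw [Finset.mem_coe, Finset.mem_product, hQ, Finset.mem_filter] at hyf
      obtain ⟨⟨-, hab, hc, hd⟩, -⟩ := hyf
      rw [Finset.mem_coe, Finset.mem_filter]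
      refine ⟨Finset.mem_univ _, ⟨?_, ?_⟩, ?_, ?_⟩
      · intro m hm hm1
        rw [hval y f m hm (by omega), hval y f (m + 1) (by omega) (by omega),
          show m + 1 - i = (m - i) + 1 from by omega]
        exact altp_ne hab (m - i)
      · intro m hm hm2
        rw [hval y f m hm (by omega), hval y f (m + 2) (by omega) (by omega),
          show m + 2 - i = (m - i) + 2 from by omega, altp_add_two]
      · rcases Nat.eq_zero_or_pos i with hi | hi
        · exact Or.inl hi
        · refine Or.inr ?_
          rw [hvalc y f hi, hb y f]
          rw [if_neg (by omega)] at hc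
          exact hc
      · by_cases hj0 : j = n - 1
        · exact Or.inl hj0
        · refine Or.inr ?_
          rw [hvald y f hj0, hval y f (j - 1) (by omega) (by omega),
            show j - 1 - i = s - 2 from by omega]
          rw [if_neg hj0] at hd
          exact hd
    · -- dec ∘ enc = id
      intro x hx
      rw [Finset.mem_coe, Finset.mem_filter] at hx
      obtain ⟨-, hA, hL, hR⟩ := hx
      funext k
      have hgoal : ∀ g h : Fin n → Fin q, xe hn g (k : ℕ) = xe hn h (k : ℕ) → g k = h k := by
        intro g h e
        rwa [xe_eq hn g _ k.isLt, xe_eq hn h _ k.isLt] at e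
      apply hgoal
      set m := (k : ℕ) with hm
      have hmn : m < n := k.isLt
      by_cases hc1 : i ≤ m + 1 ∧ m ≤ j + 1
      · by_cases hc2 : m + 1 = i
        · rw [show m = i - 1 from by omega, hvalc _ _ (by omega)]
          dsimp only
          rw [if_neg (show ¬(i = 0) from by omega)]
        · by_cases hc3 : m = j + 1
          · rw [hc3, hvald _ _ (by omega)]
            dsimp only
            rw [if_neg (show ¬(j = n - 1) from by omega)]
          · rw [hval _ _ m (by omega) (by omega)]
            have hpat := altOn_eq_altp hA (m - i) (by omega)
            rw [show i + (m - i) = m from by omega] at hpat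
            exact hpat.symm
      · rw [xe_decf hn i j _ _ m hmn, dif_neg hc1, xe_eq hn x m hmn]
    · -- enc ∘ dec = id
      rintro ⟨y, f⟩ hyf
      rw [Finset.mem_coe, Finset.mem_product, hQ, Finset.mem_filter] at hyf
      obtain ⟨⟨-, hab, hc, hd⟩, -⟩ := hyf
      simp only [Prod.ext_iff]
      refine ⟨⟨ha y f, hb y f, ?_, ?_⟩, ?_⟩
      · by_cases hi : i = 0
        · rw [if_pos hi]
          rw [if_pos hi] at hc
          exact hc.symm
        · rw [if_neg hi, hvalc y f (by omega)]
      · by_cases hj0 : j = n - 1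
        · rw [if_pos hj0]
          rw [if_pos hj0] at hd
          exact hd.symm
        · rw [if_neg hj0, hvald y f hj0]
      · funext k
        show decf i j y f k.1 = f k
        rw [decf, dif_neg k.2]
  rw [hcard, Finset.card_product, Finset.card_univ, Fintype.card_fun]
  have hsubcard : Fintype.card {k : Fin n // (i ≤ (k : ℕ) + 1 ∧ (k : ℕ) ≤ j + 1)}
      = s + (if i = 0 then 0 else 1) + (if j = n - 1 then 0 else 1) := by
    rw [Fintype.card_subtype, Finset.card_filter,
      Fin.sum_univ_eq_sum_range (fun m => if i ≤ m + 1 ∧ m ≤ j + 1 then 1 else 0) n,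
      ← Finset.card_filter]
    rw [show (Finset.range n).filter (fun m => i ≤ m + 1 ∧ m ≤ j + 1)
        = Finset.Ico (i - 1) (min (j + 2) n) from by
      ext m; simp only [Finset.mem_filter, Finset.mem_range, Finset.mem_Ico]; omega]
    rw [Nat.card_Ico]
    split_ifs <;> omega
  have hcompl : Fintype.card {k : Fin n // ¬(i ≤ (k : ℕ) + 1 ∧ (k : ℕ) ≤ j + 1)}
      = n - (s + (if i = 0 then 0 else 1) + (if j = n - 1 then 0 else 1)) := by
    rw [Fintype.card_subtype_compl, hsubcard, Fintype.card_fin]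
  rw [hcompl, Fintype.card_fin]
  congr 1
  rw [hQ]
  convert quad_count (if i = 0 then 1 else q - 1) (if j = n - 1 then 1 else q - 1)
    (fun b c => if i = 0 then c = z0 else c ≠ b)
    (fun a b d => if j = n - 1 then d = z0 else d ≠ altp a b (s - 2))
    (fun b => by
      by_cases hi : i = 0
      · simp only [if_pos hi]; exact count_eq z0
      · simp only [if_neg hi]; exact count_ne b)
    (fun a b _ => by
      by_cases hj0 : j = n - 1
      · simp only [if_pos hj0]; exact count_eq z0
      · simp only [if_neg hj0]; exact count_ne (altp a b (s - 2)))

lemma chi_step1 (q n s : ℕ) :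
    chi q n s = ∑ p ∈ Finset.range n ×ˢ Finset.range n,
      (Finset.univ.filter fun x : Fin n → Fin q =>
        IsMaxAltSeg (List.ofFn x) p.1 p.2 ∧ p.2 + 1 - p.1 = s).card := by
  rw [chi]
  have hx : ∀ x : Fin n → Fin q,
      ((maxAltSegs (List.ofFn x)).filter fun p => p.2 + 1 - p.1 = s).card
        = ∑ p ∈ Finset.range n ×ˢ Finset.range n,
            if IsMaxAltSeg (List.ofFn x) p.1 p.2 ∧ p.2 + 1 - p.1 = s then 1 else 0 := by
    intro x
    rw [maxAltSegs, List.length_ofFn, Finset.filter_filter, Finset.card_filter]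
  rw [Finset.sum_congr rfl fun x _ => hx x, Finset.sum_comm]
  exact Finset.sum_congr rfl fun p _ => (Finset.card_filter _ _).symm

theorem chi_formula' (q n s : ℕ) (hq : 2 ≤ q) (hn : 2 ≤ n) (hs1 : 2 ≤ s)
    (hs2 : s ≤ n - 1) :
    chi q n s =
      2 * (q - 1) ^ 2 * q ^ (n - s) + (n - s - 1) * (q - 1) ^ 3 * q ^ (n - s - 1) := by
  have hn0 : 0 < n := by omega
  have hq0 : 0 < q := by omega
  rw [chi_step1]
  set T : Finset (ℕ × ℕ) := (Finset.range (n - s + 1)).map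
    ⟨fun i => (i, i + s - 1), fun a b hab => (Prod.ext_iff.1 hab).1⟩ with hT
  have hsub : T ⊆ Finset.range n ×ˢ Finset.range n := by
    intro p hp
    rw [hT, Finset.mem_map] at hp
    obtain ⟨i, hi, rfl⟩ := hp
    rw [Finset.mem_range] at hi
    simp only [Function.Embedding.coeFn_mk, Finset.mem_product, Finset.mem_range]
    show i < n ∧ i + s - 1 < n
    omega
  have hvan : ∀ p ∈ Finset.range n ×ˢ Finset.range n, p ∉ T →
      (Finset.univ.filter fun x : Fin n → Fin q =>
        IsMaxAltSeg (List.ofFn x) p.1 p.2 ∧ p.2 + 1 - p.1 = s).card = 0 := by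
    intro p hp hnp
    rw [Finset.card_eq_zero, Finset.filter_eq_empty_iff]
    intro x _
    rintro ⟨hmax, hlen⟩
    apply hnp
    have hp2 : p.2 < n := by have := hmax.2.1; rwa [List.length_ofFn] at this
    have hp1 : p.1 ≤ p.2 := hmax.1
    rw [hT, Finset.mem_map]
    refine ⟨p.1, Finset.mem_range.2 (by omega), ?_⟩
    show (p.1, p.1 + s - 1) = p
    exact Prod.ext_iff.2 ⟨rfl, by omega⟩
  rw [← Finset.sum_subset hsub hvan, hT, Finset.sum_map]
  have hterm : ∀ i ∈ Finset.range (n - s + 1),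
      (Finset.univ.filter fun x : Fin n → Fin q =>
        IsMaxAltSeg (List.ofFn x) i (i + s - 1) ∧ (i + s - 1) + 1 - i = s).card
      = (q * (q - 1) * (if i = 0 then 1 else q - 1) *
          (if i + s - 1 = n - 1 then 1 else q - 1))
          * q ^ (n - (s + (if i = 0 then 0 else 1) + (if i + s - 1 = n - 1 then 0 else 1))) := by
    intro i hi
    rw [Finset.mem_range] at hi
    rw [Finset.filter_congr (fun x _ =>
      (and_iff_left (show (i + s - 1) + 1 - i = s from by omega)).trans
        (isMaxAltSeg_iff hn0 x i (i + s - 1) s hs1 rfl (by omega)))]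
    exact master_count hq0 hn0 i s hs1 (by omega)
  refine Eq.trans (Finset.sum_congr rfl fun i hi => hterm i hi) ?_
  obtain ⟨t, ht⟩ : ∃ t, n - s = t + 1 := ⟨n - s - 1, by omega⟩
  rw [show n - s + 1 = (t + 1) + 1 from by omega, Finset.sum_range_succ,
    Finset.sum_range_succ']
  have hG0 : (q * (q - 1) * (if (0:ℕ) = 0 then 1 else q - 1) *
        (if 0 + s - 1 = n - 1 then 1 else q - 1))
        * q ^ (n - (s + (if (0:ℕ) = 0 then 0 else 1) + (if 0 + s - 1 = n - 1 then 0 else 1)))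
      = q * (q - 1) * (q - 1) * q ^ (n - (s + 1)) := by
    rw [if_pos rfl, if_pos rfl, if_neg (show ¬(0 + s - 1 = n - 1) from by omega),
      if_neg (show ¬(0 + s - 1 = n - 1) from by omega)]
    ring_nf
  have hGt : (q * (q - 1) * (if t + 1 = 0 then 1 else q - 1) *
        (if t + 1 + s - 1 = n - 1 then 1 else q - 1))
        * q ^ (n - (s + (if t + 1 = 0 then 0 else 1) + (if t + 1 + s - 1 = n - 1 then 0 else 1)))
      = q * (q - 1) * (q - 1) * q ^ (n - (s + 1)) := by
    rw [if_neg (show ¬(t + 1 = 0) from by omega), if_pos (show t + 1 + s - 1 = n - 1 from by omega),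
      if_neg (show ¬(t + 1 = 0) from by omega), if_pos (show t + 1 + s - 1 = n - 1 from by omega)]
    ring_nf
  have hGi : ∀ i ∈ Finset.range t, (q * (q - 1) * (if i + 1 = 0 then 1 else q - 1) *
        (if i + 1 + s - 1 = n - 1 then 1 else q - 1))
        * q ^ (n - (s + (if i + 1 = 0 then 0 else 1) + (if i + 1 + s - 1 = n - 1 then 0 else 1)))
      = q * (q - 1) * (q - 1) * (q - 1) * q ^ (n - (s + 2)) := by
    intro i hi
    rw [Finset.mem_range] at hi
    rw [if_neg (show ¬(i + 1 = 0) from by omega),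
      if_neg (show ¬(i + 1 + s - 1 = n - 1) from by omega),
      if_neg (show ¬(i + 1 = 0) from by omega),
      if_neg (show ¬(i + 1 + s - 1 = n - 1) from by omega)]
  rw [Finset.sum_congr rfl hGi, Finset.sum_const, smul_eq_mul, hG0, hGt]
  rw [show n - (s + 2) = t - 1 from by omega, show n - (s + 1) = t from by omega,
    show n - s - 1 = t from by omega, show n - s = t + 1 from by omega, Finset.card_range]
  rcases Nat.eq_zero_or_pos t with ht0 | ht0
  · subst ht0
    ring
  · obtain ⟨u, rfl⟩ : ∃ u, t = u + 1 := ⟨t - 1, by omega⟩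
    simp only [Nat.add_sub_cancel]
    ring

end ChiProof

/-- For `2 ≤ s ≤ n-1`, the total number of maximal alternating
segments of length `s` over all `x ∈ Z_q^n` is
`2(q-1)²q^{n-s} + (n-s-1)(q-1)³q^{n-s-1}`. -/
theorem chi_formula (q n s : ℕ) (hq : 2 ≤ q) (hn : 2 ≤ n) (hs1 : 2 ≤ s)
    (hs2 : s ≤ n - 1) :
    chi q n s =
      2 * (q - 1) ^ 2 * q ^ (n - s) + (n - s - 1) * (q - 1) ^ 3 * q ^ (n - s - 1) := by
  exact ChiProof.chi_formula' q n s hq hn hs1 hs2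
end
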